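/- arXiv:2207.02004 — 2 statements merged into one kernel-verified Lean document; each statement's English description precedes it below -/
import Mathlib

section
/- Correctness of the greedy algorithm (Theorem 2, statement 1): Let GPCA process the ending times e = 2,…,n in increasing order, and for each e construct every candidate pipe (s,e,t) (with t ∈ T_s ∩ T_e, t ∉ T_i for s<i<e) whenever all intermediate magazine states currently have an empty slot. Then the resulting number of constructed pipes equals max{|P(M)| : M ∈ M}, and hence min{switches(M) : M ∈ M} = Σ_{i=1}^n |T_i| − C − GPCA(T_1,…,T_n;C). -/
def fillFrom (C : ℕ) (src dst : Finset ℕ) : Finset ℕ :=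
  dst ∪ (((src \ dst).sort (· ≤ ·)).take (C - dst.card)).toFinset

def passPairs (C : ℕ) (pairs : List (ℕ × ℕ)) (L : ℕ → Finset ℕ) : ℕ → Finset ℕ :=
  pairs.foldl (fun M p => Function.update M p.2 (fillFrom C (M p.1) (M p.2))) L

def fwdPairs (n : ℕ) : List (ℕ × ℕ) := (List.range (n - 1)).map (fun i => (i + 1, i + 2))

def bwdPairs (n : ℕ) : List (ℕ × ℕ) := (List.range (n - 1)).map (fun i => (n - i, n - i - 1))

def toFullMag (C n : ℕ) (L : ℕ → Finset ℕ) : ℕ → Finset ℕ :=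
  passPairs C (bwdPairs n) (passPairs C (fwdPairs n) L)

def addRange (t s e : ℕ) (M : ℕ → Finset ℕ) : ℕ → Finset ℕ :=
  fun i => if s < i ∧ i < e then insert t (M i) else M i

def gpcaStep (C : ℕ) (T : ℕ → Finset ℕ) (e : ℕ) (M : ℕ → Finset ℕ) (t : ℕ) : ℕ → Finset ℕ :=
  match ((List.range e).filter (fun s => decide (t ∈ T s))).max? with
  | none => M
  | some s => if ∀ i ∈ Finset.Ioo s e, (M i).card < C then addRange t s e M else M

def GPCA (C n : ℕ) (T : ℕ → Finset ℕ) : ℕ → Finset ℕ :=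
  (List.range n).foldl
    (fun M e => ((T (e + 1)).sort (· ≤ ·)).foldl (gpcaStep C T (e + 1)) M) T

def switches (n : ℕ) (L : ℕ → Finset ℕ) : ℕ :=
  ∑ i ∈ Finset.Icc 1 (n - 1), ((L (i + 1)) \ (L i)).card

def IsPipe (n : ℕ) (T L : ℕ → Finset ℕ) (s e t : ℕ) : Prop :=
  1 ≤ s ∧ s < e ∧ e ≤ n ∧ t ∈ T s ∧ t ∈ T e ∧
    ∀ i ∈ Finset.Ioo s e, t ∉ T i ∧ t ∈ L i

open Classical in
noncomputable def pipeSet (n : ℕ) (T L : ℕ → Finset ℕ) : Finset ((ℕ × ℕ) × ℕ) :=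
  ((Finset.Icc 1 n ×ˢ Finset.Icc 1 n) ×ˢ (Finset.Icc 1 n).biUnion T).filter
    (fun p => IsPipe n T L p.1.1 p.1.2 p.2)

def Feasible (C n : ℕ) (T M : ℕ → Finset ℕ) : Prop :=
  ∀ i ∈ Finset.Icc 1 n, T i ⊆ M i ∧ (M i).card = C ∧ M i ⊆ (Finset.Icc 1 n).biUnion T

namespace Gpca

variable (n C : ℕ) (T : ℕ → Finset ℕ)

def U : Finset ℕ := (Finset.Icc 1 n).biUnion T

lemma mem_pipeSet {L : ℕ → Finset ℕ} {c : (ℕ × ℕ) × ℕ} :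
    c ∈ pipeSet n T L ↔ IsPipe n T L c.1.1 c.1.2 c.2 := by
  classical
  constructor
  · intro h
    exact (Finset.mem_filter.mp h).2
  · intro h
    obtain ⟨h1, h2, h3, h4, h5, h6⟩ := h
    refine Finset.mem_filter.mpr ⟨?_, h1, h2, h3, h4, h5, h6⟩
    refine Finset.mem_product.mpr ⟨Finset.mem_product.mpr ⟨?_, ?_⟩, ?_⟩
    · exact Finset.mem_Icc.mpr ⟨h1, le_of_lt (lt_of_lt_of_le h2 h3)⟩
    · exact Finset.mem_Icc.mpr ⟨le_trans h1 (le_of_lt h2), h3⟩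
    · exact Finset.mem_biUnion.mpr ⟨c.1.1, Finset.mem_Icc.mpr ⟨h1, le_of_lt (lt_of_lt_of_le h2 h3)⟩, h4⟩

noncomputable def Cand : Finset ((ℕ × ℕ) × ℕ) := pipeSet n T (fun _ => U n T)

lemma mem_Cand {c : (ℕ × ℕ) × ℕ} :
    c ∈ Cand n T ↔ (1 ≤ c.1.1 ∧ c.1.1 < c.1.2 ∧ c.1.2 ≤ n ∧ c.2 ∈ T c.1.1 ∧ c.2 ∈ T c.1.2 ∧
      ∀ i ∈ Finset.Ioo c.1.1 c.1.2, c.2 ∉ T i) := by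
  rw [Cand, mem_pipeSet, IsPipe]
  constructor
  · rintro ⟨h1, h2, h3, h4, h5, h6⟩
    exact ⟨h1, h2, h3, h4, h5, fun i hi => (h6 i hi).1⟩
  · rintro ⟨h1, h2, h3, h4, h5, h6⟩
    refine ⟨h1, h2, h3, h4, h5, fun i hi => ⟨h6 i hi, ?_⟩⟩
    exact Finset.mem_biUnion.mpr ⟨c.1.1, Finset.mem_Icc.mpr ⟨h1, le_of_lt (lt_of_lt_of_le h2 h3)⟩, h4⟩

lemma pipeSet_subset_Cand (L : ℕ → Finset ℕ) : pipeSet n T L ⊆ Cand n T := by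
  intro c hc
  rw [mem_pipeSet] at hc
  obtain ⟨h1, h2, h3, h4, h5, h6⟩ := hc
  exact (mem_Cand n T).mpr ⟨h1, h2, h3, h4, h5, fun i hi => (h6 i hi).1⟩

lemma pipeSet_mono {L L' : ℕ → Finset ℕ} (h : ∀ i, L i ⊆ L' i) :
    pipeSet n T L ⊆ pipeSet n T L' := by
  intro c hc
  rw [mem_pipeSet] at hc ⊢
  obtain ⟨h1, h2, h3, h4, h5, h6⟩ := hc
  exact ⟨h1, h2, h3, h4, h5, fun i hi => ⟨(h6 i hi).1, h i (h6 i hi).2⟩⟩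

/-- two candidates with the same tool covering a common interior point coincide -/
lemma cand_unique {c₁ c₂ : (ℕ × ℕ) × ℕ} (h₁ : c₁ ∈ Cand n T) (h₂ : c₂ ∈ Cand n T)
    (ht : c₁.2 = c₂.2) {i : ℕ} (hi₁ : c₁.1.1 < i ∧ i < c₁.1.2) (hi₂ : c₂.1.1 < i ∧ i < c₂.1.2) :
    c₁ = c₂ := by
  obtain ⟨a1, b1, d1, e1, f1, g1⟩ := (mem_Cand n T).mp h₁
  obtain ⟨a2, b2, d2, e2, f2, g2⟩ := (mem_Cand n T).mp h₂
  rw [ht] at e1 f1 g1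
  have hs : c₁.1.1 = c₂.1.1 := by
    rcases lt_trichotomy c₁.1.1 c₂.1.1 with h | h | h
    · exact absurd e2 (g1 _ (Finset.mem_Ioo.mpr ⟨h, lt_trans hi₂.1 hi₁.2⟩))
    · exact h
    · exact absurd e1 (g2 _ (Finset.mem_Ioo.mpr ⟨h, lt_trans hi₁.1 hi₂.2⟩))
  have he : c₁.1.2 = c₂.1.2 := by
    rcases lt_trichotomy c₁.1.2 c₂.1.2 with h | h | h
    · exact absurd f1 (g2 _ (Finset.mem_Ioo.mpr ⟨lt_trans hi₂.1 hi₁.2, h⟩))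
    · exact h
    · exact absurd f2 (g1 _ (Finset.mem_Ioo.mpr ⟨lt_trans hi₁.1 hi₂.2, h⟩))
  have : c₁.1 = c₂.1 := Prod.ext hs he
  exact Prod.ext this ht

def cov (A : Finset ((ℕ × ℕ) × ℕ)) (i : ℕ) : ℕ :=
  (A.filter (fun c => c.1.1 < i ∧ i < c.1.2)).card

def mag (A : Finset ((ℕ × ℕ) × ℕ)) : ℕ → Finset ℕ :=
  fun i => T i ∪ (A.filter (fun c => c.1.1 < i ∧ i < c.1.2)).image (fun c => c.2)

lemma mem_mag {A : Finset ((ℕ × ℕ) × ℕ)} {i t : ℕ} :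
    t ∈ mag T A i ↔ t ∈ T i ∨ ∃ c ∈ A, (c.1.1 < i ∧ i < c.1.2) ∧ c.2 = t := by
  simp only [mag, Finset.mem_union, Finset.mem_image, Finset.mem_filter]
  tauto

lemma mag_card {A : Finset ((ℕ × ℕ) × ℕ)} (hA : A ⊆ Cand n T) (i : ℕ) :
    (mag T A i).card = (T i).card + cov A i := by
  rw [mag, Finset.card_union_of_disjoint, cov]
  · congr 1
    rw [Finset.card_image_of_injOn]
    intro c hc c' hc' h
    simp only [Finset.mem_coe, Finset.mem_filter] at hc hc'
    exact cand_unique n T (hA hc.1) (hA hc'.1) h hc.2 hc'.2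
  · rw [Finset.disjoint_right]
    intro t ht
    simp only [Finset.mem_image, Finset.mem_filter] at ht
    obtain ⟨c, ⟨hcA, hci⟩, rfl⟩ := ht
    obtain ⟨_, _, _, _, _, g⟩ := (mem_Cand n T).mp (hA hcA)
    exact g i (Finset.mem_Ioo.mpr hci)




lemma cov_insert {A : Finset ((ℕ × ℕ) × ℕ)} {c} (hc : c ∉ A) (i : ℕ) :
    cov (insert c A) i = cov A i + (if c.1.1 < i ∧ i < c.1.2 then 1 else 0) := by
  rw [cov, cov, Finset.filter_insert]
  split
  · rw [Finset.card_insert_of_notMem (fun h => hc (Finset.mem_filter.mp h).1)]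
  · rw [add_zero]

lemma cov_erase {A : Finset ((ℕ × ℕ) × ℕ)} {c} (hc : c ∈ A) (i : ℕ) :
    cov A i = cov (A.erase c) i + (if c.1.1 < i ∧ i < c.1.2 then 1 else 0) := by
  have h2 : c ∉ A.erase c := Finset.notMem_erase c A
  have := cov_insert h2 i
  rwa [Finset.insert_erase hc] at this

lemma cov_mono {A B : Finset ((ℕ × ℕ) × ℕ)} (h : A ⊆ B) (i : ℕ) : cov A i ≤ cov B i :=
  Finset.card_le_card (Finset.filter_subset_filter _ h)

/-- the abstract greedy selection -/
def selStep (A : Finset ((ℕ × ℕ) × ℕ)) (c : (ℕ × ℕ) × ℕ) : Finset ((ℕ × ℕ) × ℕ) :=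
  if ∀ i ∈ Finset.Ioo c.1.1 c.1.2, (T i).card + cov A i < C then insert c A else A

def sel (cs : List ((ℕ × ℕ) × ℕ)) (A : Finset ((ℕ × ℕ) × ℕ)) : Finset ((ℕ × ℕ) × ℕ) :=
  cs.foldl (selStep C T) A

lemma sel_cons (c cs A) : sel C T (c :: cs) A =
    sel C T cs (selStep C T A c) := rfl

def SelFeas (A : Finset ((ℕ × ℕ) × ℕ)) : Prop := ∀ i, (T i).card + cov A i ≤ C

theorem greedy_opt : ∀ (cs : List ((ℕ × ℕ) × ℕ)) (A O : Finset ((ℕ × ℕ) × ℕ)),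
    List.Pairwise (fun a b => a.1.2 ≤ b.1.2) cs →
    SelFeas C T O → A ⊆ O → (O ⊆ A ∪ cs.toFinset) →
    O.card ≤ (sel C T cs A).card := by
  intro cs
  induction cs with
  | nil =>
    intro A O _ _ hAO hOA
    simp only [List.toFinset_nil, Finset.union_empty] at hOA
    rw [Finset.Subset.antisymm hOA hAO]
    simp [sel]
  | cons c cs ih =>
    intro A O hsort hO hAO hOA
    have hsort' := (List.pairwise_cons.mp hsort).2
    have hhead := (List.pairwise_cons.mp hsort).1
    rw [sel_cons, selStep]
    split
    case isTrue hacc =>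
      by_cases hcO : c ∈ O
      · -- c already in O
        refine ih (insert c A) O hsort' hO (Finset.insert_subset hcO hAO) ?_
        intro x hx
        rcases Finset.mem_union.mp (hOA hx) with h | h
        · exact Finset.mem_union_left _ (Finset.mem_insert_of_mem h)
        · rw [List.toFinset_cons, Finset.mem_insert] at h
          rcases h with rfl | h
          · exact Finset.mem_union_left _ (Finset.mem_insert_self _ _)
          · exact Finset.mem_union_right _ h
      · by_cases hsat : ∀ i ∈ Finset.Ioo c.1.1 c.1.2, (T i).card + cov O i < C
        · -- O ∪ {c} still feasible: enlarge O
          have hO' : SelFeas C T (insert c O) := by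
            intro i
            rw [cov_insert hcO]
            split
            case isTrue h =>
              have := hsat i (Finset.mem_Ioo.mpr h)
              omega
            case isFalse h => simpa using hO i
          have := ih (insert c A) (insert c O) hsort' hO'
            (Finset.insert_subset_insert _ hAO) ?_
          · calc O.card ≤ (insert c O).card := Finset.card_le_card (Finset.subset_insert _ _)
              _ ≤ _ := this
          · intro x hx
            rcases Finset.mem_insert.mp hx with rfl | hx
            · exact Finset.mem_union_left _ (Finset.mem_insert_self _ _)
            · rcases Finset.mem_union.mp (hOA hx) with h | h
              · exact Finset.mem_union_left _ (Finset.mem_insert_of_mem h)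
              · rw [List.toFinset_cons, Finset.mem_insert] at h
                rcases h with rfl | h
                · exact Finset.mem_union_left _ (Finset.mem_insert_self _ _)
                · exact Finset.mem_union_right _ h
        · -- exchange step
          push_neg at hsat
          set X := (Finset.Ioo c.1.1 c.1.2).filter (fun x => C ≤ (T x).card + cov O x) with hX
          have hXne : X.Nonempty := by
            obtain ⟨x, hx1, hx2⟩ := hsat
            exact ⟨x, Finset.mem_filter.mpr ⟨hx1, hx2⟩⟩
          set x := X.min' hXne with hxdef
          have hxmem : x ∈ Finset.filter (fun x => C ≤ (T x).card + cov O x)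
              (Finset.Ioo c.1.1 c.1.2) := hX ▸ X.min'_mem hXne
          obtain ⟨hxIoo, hxsat⟩ := Finset.mem_filter.mp hxmem
          -- find J ∈ O \ A covering x
          have hcovlt : cov A x < cov O x := by
            have h1 := hacc x hxIoo
            omega
          obtain ⟨J, hJO, hJA⟩ : ∃ J, J ∈ O.filter (fun c => c.1.1 < x ∧ x < c.1.2) ∧
              J ∉ A.filter (fun c => c.1.1 < x ∧ x < c.1.2) := by
            by_contra h
            push_neg at h
            have : cov O x ≤ cov A x := Finset.card_le_card h
            omega
          rw [Finset.mem_filter] at hJO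
          obtain ⟨hJO, hJx⟩ := hJO
          have hJnotA : J ∉ A := fun h => hJA (Finset.mem_filter.mpr ⟨h, hJx⟩)
          have hJne : J ≠ c := fun h => hcO (h ▸ hJO)
          have hJcs : J ∈ cs.toFinset := by
            rcases Finset.mem_union.mp (hOA hJO) with h | h
            · exact absurd h hJnotA
            · rw [List.toFinset_cons, Finset.mem_insert] at h
              rcases h with h | h
              · exact absurd h hJne
              · exact h
          have hJe : c.1.2 ≤ J.1.2 := hhead J (List.mem_toFinset.mp hJcs)
          set O' := insert c (O.erase J) with hO'def
          have hcO' : c ∉ O.erase J := fun h => hcO (Finset.mem_of_mem_erase h)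
          have hcardO' : O'.card = O.card := by
            rw [hO'def, Finset.card_insert_of_notMem hcO', Finset.card_erase_of_mem hJO]
            have : 0 < O.card := Finset.card_pos.mpr ⟨J, hJO⟩
            omega
          have hfeasO' : SelFeas C T O' := by
            intro i
            rw [hO'def, cov_insert hcO']
            by_cases hiI : c.1.1 < i ∧ i < c.1.2
            · rw [if_pos hiI]
              by_cases hiJ : J.1.1 < i ∧ i < J.1.2
              · -- i covered by both
                have := cov_erase hJO i
                rw [if_pos hiJ] at this
                have := hO i
                omega
              · -- i in I not in J : i < x, so not saturated
                have hilt : i < x := by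
                  rcases not_and_or.mp hiJ with h | h
                  · push_neg at h
                    -- J.1.1 ≥ i ; J.1.1 < x
                    omega
                  · push_neg at h
                    -- J.1.2 ≤ i, but i < c.1.2 ≤ J.1.2 : contradiction
                    omega
                have hinot : ¬ (C ≤ (T i).card + cov O i) := by
                  intro hcon
                  have : i ∈ X := Finset.mem_filter.mpr ⟨Finset.mem_Ioo.mpr hiI, hcon⟩
                  have := Finset.min'_le X i this
                  omega
                have : cov (O.erase J) i ≤ cov O i := cov_mono (Finset.erase_subset _ _) i
                omega
            · rw [if_neg hiI]
              have : cov (O.erase J) i ≤ cov O i := cov_mono (Finset.erase_subset _ _) i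
              have := hO i
              omega
          have hAO' : insert c A ⊆ O' := by
            rw [hO'def]
            refine Finset.insert_subset_insert _ ?_
            intro a ha
            exact Finset.mem_erase.mpr ⟨fun h => hJnotA (h ▸ ha), hAO ha⟩
          have hO'A : O' ⊆ insert c A ∪ cs.toFinset := by
            intro a ha
            rcases Finset.mem_insert.mp ha with rfl | ha
            · exact Finset.mem_union_left _ (Finset.mem_insert_self _ _)
            · have haO := Finset.mem_of_mem_erase ha
              have hane : a ≠ c := fun h => hcO (h ▸ haO)
              rcases Finset.mem_union.mp (hOA haO) with h | h
              · exact Finset.mem_union_left _ (Finset.mem_insert_of_mem h)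
              · rw [List.toFinset_cons, Finset.mem_insert] at h
                rcases h with h | h
                · exact absurd h hane
                · exact Finset.mem_union_right _ h
          have := ih (insert c A) O' hsort' hfeasO' hAO' hO'A
          omega
    case isFalse hrej =>
      -- rejected: c cannot be in O \ A
      push_neg at hrej
      obtain ⟨x, hxIoo, hxsat⟩ := hrej
      by_cases hcO : c ∈ O
      · by_cases hcA : c ∈ A
        · refine ih A O hsort' hO hAO ?_
          intro a ha
          rcases Finset.mem_union.mp (hOA ha) with h | h
          · exact Finset.mem_union_left _ h
          · rw [List.toFinset_cons, Finset.mem_insert] at h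
            rcases h with rfl | h
            · exact Finset.mem_union_left _ hcA
            · exact Finset.mem_union_right _ h
        · exfalso
          have hsub : insert c A ⊆ O := Finset.insert_subset hcO hAO
          have : cov (insert c A) x ≤ cov O x := cov_mono hsub x
          rw [cov_insert hcA, if_pos (Finset.mem_Ioo.mp hxIoo)] at this
          have := hO x
          have hax : (T x).card + cov A x ≤ C := by omega
          omega
      · refine ih A O hsort' hO hAO ?_
        intro a ha
        rcases Finset.mem_union.mp (hOA ha) with h | h
        · exact Finset.mem_union_left _ h
        · rw [List.toFinset_cons, Finset.mem_insert] at h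
          rcases h with rfl | h
          · exact absurd ha hcO
          · exact Finset.mem_union_right _ h



lemma nat_max?_eq_some_iff {l : List ℕ} {a : ℕ} : l.max? = some a ↔ a ∈ l ∧ ∀ b ∈ l, b ≤ a :=
  List.max?_eq_some_iff

def prevOcc (e t : ℕ) : Option ℕ := ((List.range e).filter (fun s => decide (t ∈ T s))).max?

lemma prevOcc_spec {e t s : ℕ} (h : prevOcc T e t = some s) :
    s < e ∧ t ∈ T s ∧ ∀ b < e, t ∈ T b → b ≤ s := by
  rw [prevOcc, nat_max?_eq_some_iff] at h
  obtain ⟨h1, h2⟩ := h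
  rw [List.mem_filter, List.mem_range] at h1
  refine ⟨h1.1, by simpa using h1.2, fun b hb htb => ?_⟩
  exact h2 b (List.mem_filter.mpr ⟨List.mem_range.mpr hb, by simpa using htb⟩)

lemma prevOcc_eq_some {e t s : ℕ} (hs : s < e) (hts : t ∈ T s)
    (hmax : ∀ b < e, t ∈ T b → b ≤ s) : prevOcc T e t = some s := by
  rw [prevOcc, nat_max?_eq_some_iff]
  constructor
  · exact List.mem_filter.mpr ⟨List.mem_range.mpr hs, by simpa using hts⟩
  · intro b hb
    rw [List.mem_filter, List.mem_range] at hb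
    exact hmax b hb.1 (by simpa using hb.2)

def candOf (p : ℕ × ℕ) : Option ((ℕ × ℕ) × ℕ) :=
  (prevOcc T p.1 p.2).map (fun s => ((s, p.1), p.2))

def ordPairs : List (ℕ × ℕ) :=
  (List.range n).flatMap (fun e => ((T (e + 1)).sort (· ≤ ·)).map (fun t => (e + 1, t)))

def ordCands : List ((ℕ × ℕ) × ℕ) := (ordPairs n T).filterMap (candOf T)

lemma candOf_mem_Cand (hout : ∀ i, i ∉ Finset.Icc 1 n → T i = ∅)
    {e t : ℕ} (he : 1 ≤ e) (hen : e ≤ n) (ht : t ∈ T e) {c : (ℕ × ℕ) × ℕ}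
    (hc : candOf T (e, t) = some c) : c ∈ Cand n T ∧ c.1.2 = e ∧ c.2 = t := by
  rw [candOf, Option.map_eq_some_iff] at hc
  obtain ⟨s, hs, rfl⟩ := hc
  obtain ⟨h1, h2, h3⟩ := prevOcc_spec T hs
  have hs1 : 1 ≤ s := by
    by_contra h
    push_neg at h
    interval_cases s
    have : T 0 = ∅ := hout 0 (by simp)
    simp [this] at h2
  refine ⟨(mem_Cand n T).mpr ?_, rfl, rfl⟩
  dsimp only
  refine ⟨hs1, h1, hen, h2, ht, fun i hi hti => ?_⟩
  rw [Finset.mem_Ioo] at hi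
  have := h3 i hi.2 hti
  omega

/-- the simulation step -/
lemma gpcaStep_mag (hout : ∀ i, i ∉ Finset.Icc 1 n → T i = ∅)
    {A : Finset ((ℕ × ℕ) × ℕ)} (hA : A ⊆ Cand n T) {e t : ℕ}
    (he : 1 ≤ e) (hen : e ≤ n) (ht : t ∈ T e) :
    gpcaStep C T e (mag T A) t = mag T ((candOf T (e, t)).elim A (selStep C T A)) ∧
      ((candOf T (e, t)).elim A (selStep C T A)) ⊆ Cand n T := by
  rcases hc : prevOcc T e t with _ | s
  · have : candOf T (e, t) = none := by rw [candOf, hc]; rfl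
    rw [this]
    constructor
    · show (match prevOcc T e t with
        | none => mag T A
        | some s => if ∀ i ∈ Finset.Ioo s e, ((mag T A) i).card < C
            then addRange t s e (mag T A) else mag T A) = mag T A
      rw [hc]
    · exact hA
  · have hcand : candOf T (e, t) = some ((s, e), t) := by rw [candOf, hc]; rfl
    rw [hcand]
    have hcC : ((s, e), t) ∈ Cand n T := (candOf_mem_Cand n T hout he hen ht hcand).1
    have hcond : (∀ i ∈ Finset.Ioo s e, ((mag T A) i).card < C) ↔
        (∀ i ∈ Finset.Ioo s e, (T i).card + cov A i < C) := by
      simp only [mag_card n T hA]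
    constructor
    · show (match prevOcc T e t with
        | none => mag T A
        | some s => if ∀ i ∈ Finset.Ioo s e, ((mag T A) i).card < C
            then addRange t s e (mag T A) else mag T A) = _
      rw [hc]
      simp only [Option.elim, selStep]
      by_cases hok : ∀ i ∈ Finset.Ioo s e, (T i).card + cov A i < C
      · rw [if_pos (hcond.mpr hok), if_pos (by simpa using hok)]
        funext i
        by_cases hi : s < i ∧ i < e
        · rw [addRange]
          simp only [if_pos hi]
          ext u
          rw [Finset.mem_insert, mem_mag, mem_mag]
          constructor
          · rintro (rfl | hu | ⟨c, hcA, hci, rfl⟩)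
            · exact Or.inr ⟨_, Finset.mem_insert_self _ _, hi, rfl⟩
            · exact Or.inl hu
            · exact Or.inr ⟨c, Finset.mem_insert_of_mem hcA, hci, rfl⟩
          · rintro (hu | ⟨c, hcA, hci, rfl⟩)
            · exact Or.inr (Or.inl hu)
            · rcases Finset.mem_insert.mp hcA with rfl | hcA
              · exact Or.inl rfl
              · exact Or.inr (Or.inr ⟨c, hcA, hci, rfl⟩)
        · rw [addRange]
          simp only [if_neg hi]
          ext u
          rw [mem_mag, mem_mag]
          constructor
          · rintro (hu | ⟨c, hcA, hci, rfl⟩)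
            · exact Or.inl hu
            · exact Or.inr ⟨c, Finset.mem_insert_of_mem hcA, hci, rfl⟩
          · rintro (hu | ⟨c, hcA, hci, rfl⟩)
            · exact Or.inl hu
            · rcases Finset.mem_insert.mp hcA with rfl | hcA
              · exact absurd hci hi
              · exact Or.inr ⟨c, hcA, hci, rfl⟩
      · rw [if_neg (fun h => hok (hcond.mp h)), if_neg (by simpa using hok)]
    · simp only [Option.elim, selStep]
      split
      · exact Finset.insert_subset hcC hA
      · exact hA

/-- flat fold simulation over a list of (e,t) pairs -/
lemma sim_list (hout : ∀ i, i ∉ Finset.Icc 1 n → T i = ∅) :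
    ∀ (ps : List (ℕ × ℕ)) (A : Finset ((ℕ × ℕ) × ℕ)), A ⊆ Cand n T →
    (∀ p ∈ ps, 1 ≤ p.1 ∧ p.1 ≤ n ∧ p.2 ∈ T p.1) →
    ps.foldl (fun M p => gpcaStep C T p.1 M p.2) (mag T A)
        = mag T (sel C T (ps.filterMap (candOf T)) A) ∧
      sel C T (ps.filterMap (candOf T)) A ⊆ Cand n T := by
  intro ps
  induction ps with
  | nil => intro A hA _; exact ⟨rfl, hA⟩
  | cons p ps ih =>
    intro A hA hps
    obtain ⟨pe, pt⟩ := p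
    obtain ⟨h1, h2, h3⟩ := hps (pe, pt) List.mem_cons_self
    have hstep := gpcaStep_mag n C T hout hA (e := pe) (t := pt) h1 h2 h3
    rw [List.foldl_cons, List.filterMap_cons]
    dsimp only
    rcases hc : candOf T (pe, pt) with _ | c
    · rw [hc] at hstep
      simp only [Option.elim] at hstep
      rw [show gpcaStep C T pe (mag T A) pt = mag T A from hstep.1]
      exact ih A hA (fun q hq => hps q (List.mem_cons_of_mem _ hq))
    · rw [hc] at hstep
      simp only [Option.elim] at hstep
      rw [show gpcaStep C T pe (mag T A) pt = mag T (selStep C T A c) from hstep.1]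
      exact ih (selStep C T A c) hstep.2 (fun q hq => hps q (List.mem_cons_of_mem _ hq))

lemma foldl_flatMap {α β γ : Type*} (f : α → List β) (g : γ → β → γ) :
    ∀ (l : List α) (a : γ), (l.flatMap f).foldl g a = l.foldl (fun a x => (f x).foldl g a) a := by
  intro l
  induction l with
  | nil => intro a; rfl
  | cons x l ih =>
    intro a
    rw [List.flatMap_cons, List.foldl_append, List.foldl_cons, ih]

noncomputable def AG : Finset ((ℕ × ℕ) × ℕ) := sel C T (ordCands n T) ∅

lemma GPCA_eq (hout : ∀ i, i ∉ Finset.Icc 1 n → T i = ∅) :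
    GPCA C n T = mag T (AG n C T) ∧ AG n C T ⊆ Cand n T := by
  have hps : ∀ p ∈ ordPairs n T, 1 ≤ p.1 ∧ p.1 ≤ n ∧ p.2 ∈ T p.1 := by
    intro p hp
    rw [ordPairs, List.mem_flatMap] at hp
    obtain ⟨e, he, hp⟩ := hp
    rw [List.mem_map] at hp
    obtain ⟨t, ht, rfl⟩ := hp
    rw [List.mem_range] at he
    exact ⟨Nat.succ_le_succ (Nat.zero_le _), Nat.succ_le_of_lt he, (Finset.mem_sort _).mp ht⟩
  have hmag0 : (T : ℕ → Finset ℕ) = mag T ∅ := by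
    funext i
    simp [mag]
  have key := sim_list n C T hout (ordPairs n T) ∅ (Finset.empty_subset _) hps
  have hfold : GPCA C n T
      = (ordPairs n T).foldl (fun M p => gpcaStep C T p.1 M p.2) T := by
    rw [GPCA, ordPairs, foldl_flatMap]
    congr 1
    funext M e
    rw [List.foldl_map]
  rw [← hmag0] at key
  rw [hfold]
  exact ⟨key.1, key.2⟩


lemma candOf_proj {p : ℕ × ℕ} {c : (ℕ × ℕ) × ℕ} (h : candOf T p = some c) :
    c.1.2 = p.1 ∧ c.2 = p.2 := by
  rw [candOf, Option.map_eq_some_iff] at h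
  obtain ⟨s, _, rfl⟩ := h
  exact ⟨rfl, rfl⟩

lemma pairwise_trivial {α : Type*} {R : α → α → Prop} (h : ∀ a b, R a b) :
    ∀ l : List α, l.Pairwise R := by
  intro l
  induction l with
  | nil => exact List.Pairwise.nil
  | cons a l ih => exact List.Pairwise.cons (fun b _ => h a b) ih

lemma ordCands_sorted : List.Pairwise (fun a b => a.1.2 ≤ b.1.2) (ordCands n T) := by
  rw [ordCands, List.pairwise_filterMap, ordPairs, List.pairwise_flatMap]
  constructor
  · intro e _
    rw [List.pairwise_map]
    refine pairwise_trivial ?_ _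
    intro a b c hc c' hc'
    rw [(candOf_proj T hc).1, (candOf_proj T hc').1]
  · refine (List.pairwise_lt_range (n := n)).imp ?_
    intro e e' hee x hx y hy c hc c' hc'
    rw [List.mem_map] at hx hy
    obtain ⟨t, _, rfl⟩ := hx
    obtain ⟨t', _, rfl⟩ := hy
    rw [(candOf_proj T hc).1, (candOf_proj T hc').1]
    omega

lemma Cand_subset_ordCands : ∀ c ∈ Cand n T, c ∈ ordCands n T := by
  intro c hc
  obtain ⟨⟨s, e⟩, t⟩ := c
  obtain ⟨h1, h2, h3, h4, h5, h6⟩ := (mem_Cand n T).mp hc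
  dsimp only at h1 h2 h3 h4 h5 h6
  rw [ordCands, List.mem_filterMap]
  refine ⟨(e, t), ?_, ?_⟩
  · rw [ordPairs, List.mem_flatMap]
    have hee : e - 1 + 1 = e := by omega
    refine ⟨e - 1, List.mem_range.mpr (by omega), ?_⟩
    rw [hee, List.mem_map]
    exact ⟨t, (Finset.mem_sort _).mpr h5, rfl⟩
  · rw [candOf]
    have : prevOcc T e t = some s := by
      refine prevOcc_eq_some T h2 h4 ?_
      intro b hb htb
      by_contra hbs
      push_neg at hbs
      exact h6 b (Finset.mem_Ioo.mpr ⟨hbs, hb⟩) htb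
    rw [this]
    rfl

lemma sel_subset_self : ∀ (cs : List ((ℕ × ℕ) × ℕ)) (A), A ⊆ sel C T cs A := by
  intro cs
  induction cs with
  | nil => intro A; exact Finset.Subset.refl A
  | cons c cs ih =>
    intro A
    refine Finset.Subset.trans ?_ (ih (selStep C T A c))
    rw [selStep]
    split
    · exact Finset.subset_insert _ _
    · exact Finset.Subset.refl A

lemma mem_sel_of_empty_interior : ∀ (cs : List ((ℕ × ℕ) × ℕ)) (A c), c ∈ cs →
    Finset.Ioo c.1.1 c.1.2 = ∅ → c ∈ sel C T cs A := by
  intro cs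
  induction cs with
  | nil => intro A c hc; exact absurd hc List.not_mem_nil
  | cons d cs ih =>
    intro A c hc hioo
    rcases List.mem_cons.mp hc with rfl | hc
    · have hacc : ∀ i ∈ Finset.Ioo c.1.1 c.1.2, (T i).card + cov A i < C := by
        rw [hioo]; intro i hi; exact absurd hi (Finset.notMem_empty i)
      rw [sel_cons, selStep, if_pos hacc]
      exact sel_subset_self C T cs _ (Finset.mem_insert_self c A)
    · exact ih (selStep C T A d) c hc hioo

lemma sel_feas : ∀ (cs : List ((ℕ × ℕ) × ℕ)) (A), SelFeas C T A → SelFeas C T (sel C T cs A) := by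
  intro cs
  induction cs with
  | nil => intro A hA; exact hA
  | cons c cs ih =>
    intro A hA
    refine ih (selStep C T A c) ?_
    rw [selStep]
    split
    case isTrue hacc =>
      by_cases hcA : c ∈ A
      · rwa [Finset.insert_eq_self.mpr hcA]
      · intro i
        rw [cov_insert hcA]
        split
        next h => have := hacc i (Finset.mem_Ioo.mpr h); omega
        next h => have := hA i; omega
    case isFalse => exact hA

lemma pipeSet_mag_eq {A : Finset ((ℕ × ℕ) × ℕ)} (hA : A ⊆ Cand n T)
    (hemp : ∀ c ∈ Cand n T, Finset.Ioo c.1.1 c.1.2 = ∅ → c ∈ A) :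
    pipeSet n T (mag T A) = A := by
  apply Finset.Subset.antisymm
  · intro c hc
    have hcC := pipeSet_subset_Cand n T _ hc
    rw [mem_pipeSet] at hc
    obtain ⟨h1, h2, h3, h4, h5, h6⟩ := hc
    rcases Finset.eq_empty_or_nonempty (Finset.Ioo c.1.1 c.1.2) with hioo | ⟨i, hi⟩
    · exact hemp c hcC hioo
    · obtain ⟨hT, hL⟩ := h6 i hi
      rcases (mem_mag T).mp hL with h | ⟨c', hc'A, hc'i, hct⟩
      · exact absurd h hT
      · rwa [cand_unique n T hcC (hA hc'A) hct.symm (Finset.mem_Ioo.mp hi) hc'i]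
  · intro c hcA
    obtain ⟨h1, h2, h3, h4, h5, h6⟩ := (mem_Cand n T).mp (hA hcA)
    rw [mem_pipeSet]
    exact ⟨h1, h2, h3, h4, h5, fun i hi =>
      ⟨h6 i hi, (mem_mag T).mpr (Or.inr ⟨c, hcA, Finset.mem_Ioo.mp hi, rfl⟩)⟩⟩

lemma pipeSet_feas_of_feasible {M : ℕ → Finset ℕ}
    (hTc : ∀ i ∈ Finset.Icc 1 n, (T i).card ≤ C)
    (hout : ∀ i, i ∉ Finset.Icc 1 n → T i = ∅)
    (hM : Feasible C n T M) : SelFeas C T (pipeSet n T M) := by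
  intro i
  have hTle : (T i).card ≤ C := by
    by_cases h : i ∈ Finset.Icc 1 n
    · exact hTc i h
    · rw [hout i h]; simp
  rcases Finset.eq_empty_or_nonempty
      ((pipeSet n T M).filter (fun c => c.1.1 < i ∧ i < c.1.2)) with hemp | ⟨c0, hc0⟩
  · rw [cov, hemp]
    simpa using hTle
  · rw [Finset.mem_filter] at hc0
    obtain ⟨hc0P, hc0i⟩ := hc0
    have hc0C := (mem_Cand n T).mp (pipeSet_subset_Cand n T M hc0P)
    have hiIcc : i ∈ Finset.Icc 1 n := by
      rw [Finset.mem_Icc]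
      obtain ⟨a, b, d, _⟩ := hc0C
      omega
    obtain ⟨hTM, hMcard, _⟩ := hM i hiIcc
    have himg : ((pipeSet n T M).filter (fun c => c.1.1 < i ∧ i < c.1.2)).image (fun c => c.2)
        ⊆ M i \ T i := by
      intro u hu
      rw [Finset.mem_image] at hu
      obtain ⟨c, hc, rfl⟩ := hu
      rw [Finset.mem_filter] at hc
      obtain ⟨hcP, hci⟩ := hc
      have hcC := (mem_Cand n T).mp (pipeSet_subset_Cand n T M hcP)
      rw [mem_pipeSet] at hcP
      obtain ⟨_, _, _, _, _, h6⟩ := hcP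
      rw [Finset.mem_sdiff]
      exact ⟨(h6 i (Finset.mem_Ioo.mpr hci)).2, (h6 i (Finset.mem_Ioo.mpr hci)).1⟩
    have hinj : cov (pipeSet n T M) i
        = (((pipeSet n T M).filter (fun c => c.1.1 < i ∧ i < c.1.2)).image (fun c => c.2)).card := by
      rw [cov, Finset.card_image_of_injOn]
      intro c hc c' hc' h
      simp only [Finset.mem_coe, Finset.mem_filter] at hc hc'
      exact cand_unique n T (pipeSet_subset_Cand n T M hc.1) (pipeSet_subset_Cand n T M hc'.1)
        h hc.2 hc'.2
    have hcard : (M i \ T i).card = C - (T i).card := by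
      rw [Finset.card_sdiff_of_subset hTM, hMcard]
    have := Finset.card_le_card himg
    rw [hcard] at this
    rw [hinj]
    have hTsub : (T i).card ≤ C := hTle
    omega


lemma subset_fillFrom (C : ℕ) (src dst : Finset ℕ) : dst ⊆ fillFrom C src dst :=
  Finset.subset_union_left

lemma fillFrom_subset (C : ℕ) (src dst : Finset ℕ) : fillFrom C src dst ⊆ dst ∪ src := by
  rw [fillFrom]
  refine Finset.union_subset Finset.subset_union_left ?_
  intro x hx
  rw [List.mem_toFinset] at hx
  have := List.mem_of_mem_take hx
  rw [Finset.mem_sort] at this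
  exact Finset.mem_union_right _ (Finset.mem_sdiff.mp this).1

lemma fillFrom_card {C : ℕ} {src dst : Finset ℕ} (h : dst.card ≤ C) :
    (fillFrom C src dst).card = min C (dst ∪ src).card := by
  rw [fillFrom]
  have hnd : (((src \ dst).sort (· ≤ ·)).take (C - dst.card)).Nodup :=
    (Finset.sort_nodup _ _).sublist (List.take_sublist _ _)
  have hdisj : Disjoint dst (((src \ dst).sort (· ≤ ·)).take (C - dst.card)).toFinset := by
    rw [Finset.disjoint_right]
    intro x hx
    rw [List.mem_toFinset] at hx
    have := List.mem_of_mem_take hx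
    rw [Finset.mem_sort, Finset.mem_sdiff] at this
    exact this.2
  rw [Finset.card_union_of_disjoint hdisj, List.card_toFinset, hnd.dedup, List.length_take,
    Finset.length_sort]
  have hu := Finset.card_sdiff_add_card src dst
  rw [Finset.union_comm dst src]
  omega

noncomputable def fullOf (L : ℕ → Finset ℕ) : ℕ → Finset ℕ := fun i => fillFrom C (U n T) (L i)

lemma mag_subset_U (hout : ∀ i, i ∉ Finset.Icc 1 n → T i = ∅)
    {A : Finset ((ℕ × ℕ) × ℕ)} (hA : A ⊆ Cand n T) (i : ℕ) : mag T A i ⊆ U n T := by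
  intro u hu
  rcases (mem_mag T).mp hu with h | ⟨c, hcA, _, rfl⟩
  · by_cases hi : i ∈ Finset.Icc 1 n
    · exact Finset.mem_biUnion.mpr ⟨i, hi, h⟩
    · rw [hout i hi] at h
      exact absurd h (Finset.notMem_empty u)
  · obtain ⟨h1, h2, h3, h4, _⟩ := (mem_Cand n T).mp (hA hcA)
    exact Finset.mem_biUnion.mpr ⟨c.1.1, Finset.mem_Icc.mpr ⟨h1, by omega⟩, h4⟩

lemma fullOf_feasible (hout : ∀ i, i ∉ Finset.Icc 1 n → T i = ∅)
    (hm : C < (U n T).card) {A : Finset ((ℕ × ℕ) × ℕ)} (hA : A ⊆ Cand n T)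
    (hfeas : SelFeas C T A) : Feasible C n T (fullOf n C T (mag T A)) := by
  intro i _
  have hLU : mag T A i ⊆ U n T := mag_subset_U n T hout hA i
  have hLC : (mag T A i).card ≤ C := by
    rw [mag_card n T hA]
    exact hfeas i
  refine ⟨?_, ?_, ?_⟩
  · exact Finset.Subset.trans Finset.subset_union_left (subset_fillFrom _ _ _)
  · rw [fullOf, fillFrom_card hLC]
    rw [Finset.union_eq_right.mpr hLU]
    omega
  · refine Finset.Subset.trans (fillFrom_subset _ _ _) ?_
    rw [Finset.union_eq_right.mpr hLU]
    exact fun x hx => hx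

lemma stmt1 (hn : 1 ≤ n) (hout : ∀ i, i ∉ Finset.Icc 1 n → T i = ∅)
    (hTc : ∀ i ∈ Finset.Icc 1 n, (T i).card ≤ C)
    (hm : C < (U n T).card) :
    (pipeSet n T (GPCA C n T)).card
        = sSup {k | ∃ M, Feasible C n T M ∧ (pipeSet n T M).card = k} := by
  obtain ⟨hGP, hAGC⟩ := GPCA_eq n C T hout
  have hT' : SelFeas C T (∅ : Finset ((ℕ × ℕ) × ℕ)) := by
    intro i
    rw [cov]
    simp only [Finset.filter_empty, Finset.card_empty, add_zero]
    by_cases h : i ∈ Finset.Icc 1 n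
    · exact hTc i h
    · rw [hout i h]; simp
  have hAGfeas : SelFeas C T (AG n C T) := sel_feas C T _ ∅ hT'
  have hpipesAG : pipeSet n T (GPCA C n T) = AG n C T := by
    rw [hGP]
    exact pipeSet_mag_eq n T hAGC
      (fun c hc hioo => mem_sel_of_empty_interior C T _ ∅ c (Cand_subset_ordCands n T c hc) hioo)
  have hbound : ∀ M : ℕ → Finset ℕ, Feasible C n T M →
      (pipeSet n T M).card ≤ (AG n C T).card := by
    intro M hM
    refine greedy_opt C T (ordCands n T) ∅ (pipeSet n T M) (ordCands_sorted n T)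
      (pipeSet_feas_of_feasible n C T hTc hout hM) (Finset.empty_subset _) ?_
    intro c hc
    exact Finset.mem_union_right _
      (List.mem_toFinset.mpr (Cand_subset_ordCands n T c (pipeSet_subset_Cand n T M hc)))
  have hM0 : Feasible C n T (fullOf n C T (GPCA C n T)) := by
    rw [hGP]
    exact fullOf_feasible n C T hout hm hAGC hAGfeas
  have hM0pipes : (pipeSet n T (fullOf n C T (GPCA C n T))).card = (AG n C T).card := by
    refine le_antisymm (hbound _ hM0) ?_
    rw [← hpipesAG]
    refine Finset.card_le_card (pipeSet_mono n T ?_)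
    intro i
    exact subset_fillFrom _ _ _
  rw [hpipesAG]
  apply le_antisymm
  · refine le_csSup ⟨(AG n C T).card, ?_⟩ ?_
    · rintro k ⟨M, hM, rfl⟩
      exact hbound M hM
    · exact ⟨fullOf n C T (GPCA C n T), hM0, hM0pipes⟩
  · refine csSup_le ⟨(AG n C T).card, fullOf n C T (GPCA C n T), hM0, hM0pipes⟩ ?_
    rintro k ⟨M, hM, rfl⟩
    exact hbound M hM


section Counting
variable {M : ℕ → Finset ℕ}

/-- the finset of occurrences -/
noncomputable def occS : Finset ((_ : ℕ) × ℕ) := (Finset.Icc 1 n).sigma T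

/-- the finset of switch events of M -/
noncomputable def swS (M : ℕ → Finset ℕ) : Finset ((_ : ℕ) × ℕ) :=
  (Finset.Icc 1 (n - 1)).sigma (fun i => M (i + 1) \ M i)

lemma occS_card : (occS n T).card = ∑ i ∈ Finset.Icc 1 n, (T i).card :=
  Finset.card_sigma _ _

lemma swS_card (M : ℕ → Finset ℕ) : (swS n M).card = switches n M :=
  Finset.card_sigma _ _

open Classical in
noncomputable def chargeL (M : ℕ → Finset ℕ) (x : (_ : ℕ) × ℕ) :
    ℕ ⊕ (((_ : ℕ) × ℕ) ⊕ ((ℕ × ℕ) × ℕ)) :=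
  if 0 < Nat.findGreatest (fun s => x.2 ∈ T s) (x.1 - 1) ∧
      ∀ k ∈ Finset.Ioo (Nat.findGreatest (fun s => x.2 ∈ T s) (x.1 - 1)) x.1, x.2 ∈ M k then
    Sum.inr (Sum.inr ((Nat.findGreatest (fun s => x.2 ∈ T s) (x.1 - 1), x.1), x.2))
  else if sInf {j | 1 ≤ j ∧ ∀ k ∈ Finset.Icc j x.1, x.2 ∈ M k} = 1 then Sum.inl x.2
  else Sum.inr (Sum.inl ⟨sInf {j | 1 ≤ j ∧ ∀ k ∈ Finset.Icc j x.1, x.2 ∈ M k} - 1, x.2⟩)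

/-- if `t` occurs at `i < i'` and is continuously present on `[j', i']` with `j' ≤ i`,
then the pipe condition holds at `i'` -/
lemma pipe_cond_of (hout : ∀ i, i ∉ Finset.Icc 1 n → T i = ∅) {t i i' j' : ℕ}
    (hii : i < i') (ht : t ∈ T i) (hj : j' ≤ i) (hchain : ∀ k ∈ Finset.Icc j' i', t ∈ M k) :
    0 < Nat.findGreatest (fun s => t ∈ T s) (i' - 1) ∧
      ∀ k ∈ Finset.Ioo (Nat.findGreatest (fun s => t ∈ T s) (i' - 1)) i', t ∈ M k := by
  classical
  have hi1 : 1 ≤ i := by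
    by_contra h
    push_neg at h
    interval_cases i
    rw [hout 0 (by simp)] at ht
    exact absurd ht (Finset.notMem_empty t)
  have hle : i ≤ Nat.findGreatest (fun s => t ∈ T s) (i' - 1) :=
    Nat.le_findGreatest (by omega) ht
  refine ⟨by omega, fun k hk => ?_⟩
  rw [Finset.mem_Ioo] at hk
  exact hchain k (Finset.mem_Icc.mpr ⟨by omega, by omega⟩)

lemma sInf_chain_le {t i : ℕ} (hi : i ∈ Finset.Icc 1 n) (hti : t ∈ M i)
    (hM : Feasible C n T M) : sInf {j | 1 ≤ j ∧ ∀ k ∈ Finset.Icc j i, t ∈ M k} ≤ i := by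
  refine Nat.sInf_le ⟨(Finset.mem_Icc.mp hi).1, fun k hk => ?_⟩
  rw [Finset.mem_Icc] at hk
  have : k = i := le_antisymm hk.2 hk.1
  rwa [this]

lemma lower_count (hn : 1 ≤ n) (hout : ∀ i, i ∉ Finset.Icc 1 n → T i = ∅)
    (hM : Feasible C n T M) :
    ∑ i ∈ Finset.Icc 1 n, (T i).card ≤ C + switches n M + (pipeSet n T M).card := by
  classical
  have hMem : ∀ i ∈ Finset.Icc 1 n, ∀ t ∈ T i, t ∈ M i := fun i hi t ht => (hM i hi).1 ht
  have key : (occS n T).card ≤ ((M 1).disjSum ((swS n M).disjSum (pipeSet n T M))).card := by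
    refine Finset.card_le_card_of_injOn (chargeL T M) ?_ ?_
    · -- maps to
      rintro ⟨i, t⟩ hx
      simp only [occS, Finset.mem_coe, Finset.mem_sigma, Finset.mem_Icc] at hx ⊢
      obtain ⟨hi, ht⟩ := hx
      unfold chargeL
      dsimp only
      split
      case isTrue h =>
        obtain ⟨hs0, hchain⟩ := h
        have hsi : Nat.findGreatest (fun s => t ∈ T s) (i - 1) ≤ i - 1 := Nat.findGreatest_le _
        have hTs : t ∈ T (Nat.findGreatest (fun s => t ∈ T s) (i - 1)) :=
          Nat.findGreatest_of_ne_zero (P := fun s => t ∈ T s) rfl (by omega)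
        rw [Finset.mem_disjSum]
        refine Or.inr ⟨_, ?_, rfl⟩
        rw [Finset.mem_disjSum]
        refine Or.inr ⟨_, ?_, rfl⟩
        rw [mem_pipeSet]
        dsimp only
        refine ⟨hs0, by omega, hi.2, hTs, ht, fun k hk => ?_⟩
        have hk' := Finset.mem_Ioo.mp hk
        exact ⟨Nat.findGreatest_is_greatest (P := fun s => t ∈ T s) (n := i - 1) hk'.1
          (by omega), hchain k hk⟩
      case isFalse h =>
        have hne : {j | 1 ≤ j ∧ ∀ k ∈ Finset.Icc j i, t ∈ M k}.Nonempty := by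
          refine ⟨i, hi.1, fun k hk => ?_⟩
          rw [Finset.mem_Icc] at hk
          have : k = i := le_antisymm hk.2 hk.1
          rw [this]
          exact hMem i (Finset.mem_Icc.mpr hi) t ht
        have hjmem := Nat.sInf_mem hne
        obtain ⟨hj1, hjchain⟩ := hjmem
        have hji : sInf {j | 1 ≤ j ∧ ∀ k ∈ Finset.Icc j i, t ∈ M k} ≤ i :=
          sInf_chain_le n C T (Finset.mem_Icc.mpr hi) (hMem i (Finset.mem_Icc.mpr hi) t ht) hM
        split
        case isTrue hj1' =>
          rw [Finset.mem_disjSum]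
          exact Or.inl ⟨t, hjchain 1 (Finset.mem_Icc.mpr ⟨by omega, by omega⟩), rfl⟩
        case isFalse hj1' =>
          rw [Finset.mem_disjSum]
          refine Or.inr ⟨_, ?_, rfl⟩
          rw [Finset.mem_disjSum]
          refine Or.inl ⟨_, ?_, rfl⟩
          rw [swS, Finset.mem_sigma, Finset.mem_Icc, Finset.mem_sdiff]
          dsimp only
          set j := sInf {j | 1 ≤ j ∧ ∀ k ∈ Finset.Icc j i, t ∈ M k} with hjdef
          have hj2 : 2 ≤ j := by omega
          refine ⟨⟨by omega, by omega⟩, ?_, ?_⟩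
          · have hjj : j - 1 + 1 = j := by omega
            rw [hjj]
            exact hjchain j (Finset.mem_Icc.mpr ⟨le_refl _, hji⟩)
          · intro hcon
            have hmem : j - 1 ∈ {j | 1 ≤ j ∧ ∀ k ∈ Finset.Icc j i, t ∈ M k} := by
              refine ⟨by omega, fun k hk => ?_⟩
              rw [Finset.mem_Icc] at hk
              rcases Nat.eq_or_lt_of_le hk.1 with heq | hlt
              · rw [← heq]; exact hcon
              · exact hjchain k (Finset.mem_Icc.mpr ⟨by omega, hk.2⟩)
            have := Nat.sInf_le hmem
            omega
    · -- injectivity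
      rintro ⟨i, t⟩ hx ⟨i', t'⟩ hy heq
      simp only [Finset.mem_coe, occS, Finset.mem_sigma, Finset.mem_Icc] at hx hy
      obtain ⟨hi, ht⟩ := hx
      obtain ⟨hi', ht'⟩ := hy
      unfold chargeL at heq
      dsimp only at heq
      have main : ∀ a b : ℕ, 1 ≤ a → b ≤ n → t ∈ T a → t ∈ T b →
          a < b →
          (¬(0 < Nat.findGreatest (fun s => t ∈ T s) (b - 1) ∧
            ∀ k ∈ Finset.Ioo (Nat.findGreatest (fun s => t ∈ T s) (b - 1)) b, t ∈ M k)) →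
          (sInf {j | 1 ≤ j ∧ ∀ k ∈ Finset.Icc j b, t ∈ M k} ≤ a) → False := by
        intro a b ha1 hbn hta htb hab hnot hle
        have hne : {j | 1 ≤ j ∧ ∀ k ∈ Finset.Icc j b, t ∈ M k}.Nonempty := by
          refine ⟨b, by omega, fun k hk => ?_⟩
          rw [Finset.mem_Icc] at hk
          have : k = b := le_antisymm hk.2 hk.1
          rw [this]
          exact hMem b (Finset.mem_Icc.mpr ⟨by omega, hbn⟩) t htb
        obtain ⟨hj1, hjchain⟩ := Nat.sInf_mem hne
        exact hnot (pipe_cond_of n T hout hab hta hle hjchain)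
      by_cases hpx : (0 < Nat.findGreatest (fun s => t ∈ T s) (i - 1) ∧
          ∀ k ∈ Finset.Ioo (Nat.findGreatest (fun s => t ∈ T s) (i - 1)) i, t ∈ M k)
      · rw [if_pos hpx] at heq
        by_cases hpy : (0 < Nat.findGreatest (fun s => t' ∈ T s) (i' - 1) ∧
            ∀ k ∈ Finset.Ioo (Nat.findGreatest (fun s => t' ∈ T s) (i' - 1)) i', t' ∈ M k)
        · rw [if_pos hpy] at heq
          simp only [Sum.inr.injEq, Prod.mk.injEq] at heq
          obtain ⟨⟨_, rfl⟩, rfl⟩ := heq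
          rfl
        · rw [if_neg hpy] at heq
          split_ifs at heq <;> simp at heq
      · rw [if_neg hpx] at heq
        by_cases hpy : (0 < Nat.findGreatest (fun s => t' ∈ T s) (i' - 1) ∧
            ∀ k ∈ Finset.Ioo (Nat.findGreatest (fun s => t' ∈ T s) (i' - 1)) i', t' ∈ M k)
        · rw [if_pos hpy] at heq
          split_ifs at heq <;> simp at heq
        · rw [if_neg hpy] at heq
          by_cases hjx : sInf {j | 1 ≤ j ∧ ∀ k ∈ Finset.Icc j i, t ∈ M k} = 1
          · rw [if_pos hjx] at heq
            by_cases hjy : sInf {j | 1 ≤ j ∧ ∀ k ∈ Finset.Icc j i', t' ∈ M k} = 1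
            · rw [if_pos hjy] at heq
              have htt : t = t' := Sum.inl.inj heq
              subst htt
              rcases Nat.lt_trichotomy i i' with hlt | heq2 | hgt
              · exact absurd (main i i' hi.1 hi'.2 ht ht' hlt hpy (by omega)) (fun h => h)
              · rw [heq2]
              · exact absurd (main i' i hi'.1 hi.2 ht' ht hgt hpx (by omega)) (fun h => h)
            · rw [if_neg hjy] at heq
              simp at heq
          · rw [if_neg hjx] at heq
            by_cases hjy : sInf {j | 1 ≤ j ∧ ∀ k ∈ Finset.Icc j i', t' ∈ M k} = 1
            · rw [if_pos hjy] at heq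
              simp at heq
            · rw [if_neg hjy] at heq
              simp only [Sum.inr.injEq] at heq
              injection heq with heq2
              injection heq2 with h1 h2
              have htt : t = t' := h2
              subst htt
              -- sInf values are ≥ 1 and their predecessors are equal
              have hnex : {j | 1 ≤ j ∧ ∀ k ∈ Finset.Icc j i, t ∈ M k}.Nonempty :=
                ⟨i, hi.1, fun k hk => by
                  rw [Finset.mem_Icc] at hk
                  have : k = i := le_antisymm hk.2 hk.1
                  rw [this]
                  exact hMem i (Finset.mem_Icc.mpr hi) t ht⟩
              have hney : {j | 1 ≤ j ∧ ∀ k ∈ Finset.Icc j i', t ∈ M k}.Nonempty :=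
                ⟨i', hi'.1, fun k hk => by
                  rw [Finset.mem_Icc] at hk
                  have : k = i' := le_antisymm hk.2 hk.1
                  rw [this]
                  exact hMem i' (Finset.mem_Icc.mpr hi') t ht'⟩
              have hx1 := (Nat.sInf_mem hnex).1
              have hy1 := (Nat.sInf_mem hney).1
              have hjeq : sInf {j | 1 ≤ j ∧ ∀ k ∈ Finset.Icc j i, t ∈ M k}
                  = sInf {j | 1 ≤ j ∧ ∀ k ∈ Finset.Icc j i', t ∈ M k} := by omega
              have hxle : sInf {j | 1 ≤ j ∧ ∀ k ∈ Finset.Icc j i, t ∈ M k} ≤ i :=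
                sInf_chain_le n C T (Finset.mem_Icc.mpr hi)
                  (hMem i (Finset.mem_Icc.mpr hi) t ht) hM
              have hyle : sInf {j | 1 ≤ j ∧ ∀ k ∈ Finset.Icc j i', t ∈ M k} ≤ i' :=
                sInf_chain_le n C T (Finset.mem_Icc.mpr hi')
                  (hMem i' (Finset.mem_Icc.mpr hi') t ht') hM
              rcases Nat.lt_trichotomy i i' with hlt | heq2 | hgt
              · exact absurd (main i i' hi.1 hi'.2 ht ht' hlt hpy (by omega)) (fun h => h)
              · rw [heq2]
              · exact absurd (main i' i hi'.1 hi.2 ht' ht hgt hpx (by omega)) (fun h => h)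
  rw [occS_card, Finset.card_disjSum, Finset.card_disjSum, swS_card] at key
  have h1 : (M 1).card = C := (hM 1 (Finset.mem_Icc.mpr ⟨le_refl _, hn⟩)).2.1
  omega

end Counting

section FullMag

def Good (M : ℕ → Finset ℕ) : Prop :=
  ∀ t i, i ∈ Finset.Icc 1 n → t ∈ M i →
    (∃ j, j ≤ i ∧ t ∈ T j ∧ ∀ k ∈ Finset.Icc j i, t ∈ M k) ∨
    (∃ j, i ≤ j ∧ t ∈ T j ∧ ∀ k ∈ Finset.Icc i j, t ∈ M k)

lemma good_mag {A : Finset ((ℕ × ℕ) × ℕ)} (hA : A ⊆ Cand n T) : Good n T (mag T A) := by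
  intro t i hi hti
  rcases (mem_mag T).mp hti with h | ⟨c, hcA, hci, rfl⟩
  · refine Or.inl ⟨i, le_refl _, h, fun k hk => ?_⟩
    rw [Finset.mem_Icc] at hk
    have : k = i := le_antisymm hk.2 hk.1
    rwa [this]
  · obtain ⟨h1, h2, h3, h4, h5, h6⟩ := (mem_Cand n T).mp (hA hcA)
    refine Or.inr ⟨c.1.2, le_of_lt hci.2, h5, fun k hk => ?_⟩
    rw [Finset.mem_Icc] at hk
    rcases eq_or_lt_of_le hk.2 with heq | hlt
    · rw [heq]
      exact (mem_mag T).mpr (Or.inl h5)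
    · exact (mem_mag T).mpr (Or.inr ⟨c, hcA, ⟨lt_of_lt_of_le hci.1 hk.1, hlt⟩, rfl⟩)

lemma good_update {M : ℕ → Finset ℕ} {a b : ℕ} (hG : Good n T M)
    (ha : a ∈ Finset.Icc 1 n) (hab : b = a + 1 ∨ a = b + 1) :
    Good n T (Function.update M b (fillFrom C (M a) (M b))) := by
  intro t i hi hti
  have hmono : ∀ k, M k ⊆ Function.update M b (fillFrom C (M a) (M b)) k := by
    intro k
    rw [Function.update_apply]
    split
    next h =>
      rw [h]
      exact subset_fillFrom _ _ _
    next h => exact Finset.Subset.refl _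
  by_cases hib : i = b
  · subst hib
    have hti' : t ∈ fillFrom C (M a) (M i) := by
      rwa [Function.update_self] at hti
    have := fillFrom_subset C (M a) (M i) hti'
    rcases Finset.mem_union.mp this with hMb | hMa
    · rcases hG t i hi hMb with ⟨j, hj, htj, hch⟩ | ⟨j, hj, htj, hch⟩
      · exact Or.inl ⟨j, hj, htj, fun k hk => hmono k (hch k hk)⟩
      · exact Or.inr ⟨j, hj, htj, fun k hk => hmono k (hch k hk)⟩
    · rcases hG t a ha hMa with ⟨j, hj, htj, hch⟩ | ⟨j, hj, htj, hch⟩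
      · -- chain [j, a] in M
        rcases hab with hba | hba
        · -- i = a + 1 : extend chain to the right by i itself
          refine Or.inl ⟨j, by omega, htj, fun k hk => ?_⟩
          rw [Finset.mem_Icc] at hk
          by_cases hkb : k = i
          · rwa [hkb]
          · exact hmono k (hch k (Finset.mem_Icc.mpr ⟨hk.1, by omega⟩))
        · -- a = i + 1
          by_cases hja : j ≤ i
          · refine Or.inl ⟨j, by omega, htj, fun k hk => ?_⟩
            rw [Finset.mem_Icc] at hk
            by_cases hkb : k = i
            · rwa [hkb]
            · exact hmono k (hch k (Finset.mem_Icc.mpr ⟨hk.1, by omega⟩))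
          · -- j = a = i + 1
            have hja' : j = a := by omega
            rw [hja'] at htj
            refine Or.inr ⟨a, by omega, htj, fun k hk => ?_⟩
            rw [Finset.mem_Icc] at hk
            by_cases hkb : k = i
            · rwa [hkb]
            · have hka : k = a := by omega
              rw [hka]
              exact hmono a (hch a (Finset.mem_Icc.mpr ⟨by omega, le_refl _⟩))
      · -- chain [a, j] in M
        rcases hab with hba | hba
        · -- i = a + 1 : if i ≤ j keep right chain, else j = a
          by_cases hja : i ≤ j
          · refine Or.inr ⟨j, by omega, htj, fun k hk => ?_⟩
            rw [Finset.mem_Icc] at hk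
            by_cases hkb : k = i
            · rwa [hkb]
            · exact hmono k (hch k (Finset.mem_Icc.mpr ⟨by omega, hk.2⟩))
          · have hja' : j = a := by omega
            rw [hja'] at htj
            refine Or.inl ⟨a, by omega, htj, fun k hk => ?_⟩
            rw [Finset.mem_Icc] at hk
            by_cases hkb : k = i
            · rwa [hkb]
            · have hka : k = a := by omega
              rw [hka]
              exact hmono a (hch a (Finset.mem_Icc.mpr ⟨le_refl _, by omega⟩))
        · -- a = i + 1 : extend chain to the left by i
          refine Or.inr ⟨j, by omega, htj, fun k hk => ?_⟩
          rw [Finset.mem_Icc] at hk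
          by_cases hkb : k = i
          · rwa [hkb]
          · exact hmono k (hch k (Finset.mem_Icc.mpr ⟨by omega, hk.2⟩))
  · have hti' : t ∈ M i := by
      rwa [Function.update_of_ne hib] at hti
    rcases hG t i hi hti' with ⟨j, hj, htj, hch⟩ | ⟨j, hj, htj, hch⟩
    · exact Or.inl ⟨j, hj, htj, fun k hk => hmono k (hch k hk)⟩
    · exact Or.inr ⟨j, hj, htj, fun k hk => hmono k (hch k hk)⟩

lemma passPairs_cons (C : ℕ) (p : ℕ × ℕ) (ps : List (ℕ × ℕ)) (L : ℕ → Finset ℕ) :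
    passPairs C (p :: ps) L
      = passPairs C ps (Function.update L p.2 (fillFrom C (L p.1) (L p.2))) := rfl

lemma passPairs_append (C : ℕ) (ps : List (ℕ × ℕ)) (p : ℕ × ℕ) (L : ℕ → Finset ℕ) :
    passPairs C (ps ++ [p]) L
      = Function.update (passPairs C ps L) p.2
          (fillFrom C (passPairs C ps L p.1) (passPairs C ps L p.2)) := by
  rw [passPairs, List.foldl_append]
  rfl

lemma passPairs_mono (C : ℕ) : ∀ (ps : List (ℕ × ℕ)) (L : ℕ → Finset ℕ) (i : ℕ),
    L i ⊆ passPairs C ps L i := by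
  intro ps
  induction ps with
  | nil => intro L i; exact Finset.Subset.refl _
  | cons p ps ih =>
    intro L i
    rw [passPairs_cons]
    refine Finset.Subset.trans ?_ (ih _ i)
    rw [Function.update_apply]
    split
    next h =>
      rw [h]
      exact subset_fillFrom _ _ _
    next h => exact Finset.Subset.refl _

lemma passPairs_card (C : ℕ) : ∀ (ps : List (ℕ × ℕ)) (L : ℕ → Finset ℕ),
    (∀ i, (L i).card ≤ C) → ∀ i, ((passPairs C ps L) i).card ≤ C := by
  intro ps
  induction ps with
  | nil => intro L h i; exact h i
  | cons p ps ih =>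
    intro L h
    rw [passPairs_cons]
    refine ih _ ?_
    intro i
    rw [Function.update_apply]
    split
    next hh =>
      rw [fillFrom_card (h p.2)]
      omega
    next hh => exact h i

lemma passPairs_subset (C : ℕ) (S : Finset ℕ) : ∀ (ps : List (ℕ × ℕ)) (L : ℕ → Finset ℕ),
    (∀ i, L i ⊆ S) → ∀ i, passPairs C ps L i ⊆ S := by
  intro ps
  induction ps with
  | nil => intro L h i; exact h i
  | cons p ps ih =>
    intro L h
    rw [passPairs_cons]
    refine ih _ ?_
    intro i
    rw [Function.update_apply]
    split
    next hh =>
      refine Finset.Subset.trans (fillFrom_subset _ _ _) ?_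
      exact Finset.union_subset (h p.2) (h p.1)
    next hh => exact h i

lemma passPairs_good : ∀ (ps : List (ℕ × ℕ)) (L : ℕ → Finset ℕ),
    (∀ p ∈ ps, p.1 ∈ Finset.Icc 1 n ∧ (p.2 = p.1 + 1 ∨ p.1 = p.2 + 1)) →
    Good n T L → Good n T (passPairs C ps L) := by
  intro ps
  induction ps with
  | nil => intro L _ h; exact h
  | cons p ps ih =>
    intro L hps hG
    rw [passPairs_cons]
    refine ih _ (fun q hq => hps q (List.mem_cons_of_mem _ hq)) ?_
    exact good_update n C T hG (hps p List.mem_cons_self).1 (hps p List.mem_cons_self).2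

lemma fillFrom_of_small {C : ℕ} {src dst : Finset ℕ} (h : (dst ∪ src).card ≤ C) :
    fillFrom C src dst = dst ∪ src := by
  rw [fillFrom]
  have hlen : ((src \ dst).sort (· ≤ ·)).length ≤ C - dst.card := by
    rw [Finset.length_sort]
    have h1 : dst.card + (src \ dst).card = (dst ∪ src).card := by
      have := Finset.card_sdiff_add_card src dst
      rw [Finset.union_comm dst src]
      omega
    have h2 : dst.card ≤ (dst ∪ src).card := Finset.card_le_card Finset.subset_union_left
    omega
  rw [List.take_of_length_le hlen, Finset.sort_toFinset]
  exact Finset.union_sdiff_self_eq_union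

end FullMag

section Passes
variable {L : ℕ → Finset ℕ}

lemma fwd_inv (hL : ∀ i, (L i).card ≤ C) : ∀ m : ℕ,
    (∀ i, m + 2 ≤ i → passPairs C ((List.range m).map (fun i => (i + 1, i + 2))) L i = L i) ∧
    (((passPairs C ((List.range m).map (fun i => (i + 1, i + 2))) L) (m + 1)).card = C ∨
      ∀ j ∈ Finset.Icc 1 (m + 1), L j ⊆
        (passPairs C ((List.range m).map (fun i => (i + 1, i + 2))) L) (m + 1)) := by
  intro m
  induction m with
  | zero =>
    refine ⟨fun i _ => rfl, Or.inr fun j hj => ?_⟩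
    rw [Finset.mem_Icc] at hj
    have : j = 1 := by omega
    rw [this]
    exact Finset.Subset.refl _
  | succ m ih =>
    obtain ⟨ih1, ih2⟩ := ih
    have hsplit : passPairs C ((List.range (m + 1)).map (fun i => (i + 1, i + 2))) L
        = Function.update (passPairs C ((List.range m).map (fun i => (i + 1, i + 2))) L) (m + 2)
          (fillFrom C (passPairs C ((List.range m).map (fun i => (i + 1, i + 2))) L (m + 1))
            (passPairs C ((List.range m).map (fun i => (i + 1, i + 2))) L (m + 2))) := by
      rw [List.range_succ, List.map_append]
      exact passPairs_append C _ _ L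
    set G := passPairs C ((List.range m).map (fun i => (i + 1, i + 2))) L with hG
    have hGcard : ∀ i, (G i).card ≤ C := passPairs_card C _ L hL
    constructor
    · intro i hi
      rw [hsplit, Function.update_of_ne (by omega)]
      exact ih1 i (by omega)
    · rw [hsplit, Function.update_self, ih1 (m + 2) (by omega)]
      rcases ih2 with hcard | hcover
      · left
        rw [fillFrom_card (hL (m + 2))]
        have : C ≤ (L (m + 2) ∪ G (m + 1)).card := by
          calc C = (G (m + 1)).card := hcard.symm
          _ ≤ _ := Finset.card_le_card Finset.subset_union_right
        omega
      · by_cases hbig : C ≤ (L (m + 2) ∪ G (m + 1)).card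
        · left
          rw [fillFrom_card (hL (m + 2))]
          omega
        · right
          push_neg at hbig
          rw [fillFrom_of_small (by omega)]
          intro j hj
          rw [Finset.mem_Icc] at hj
          by_cases hjm : j = m + 2
          · rw [hjm]
            exact Finset.subset_union_left
          · refine Finset.Subset.trans (hcover j (Finset.mem_Icc.mpr ⟨hj.1, by omega⟩)) ?_
            exact Finset.subset_union_right

lemma fwd_card (hn : 1 ≤ n) (hL : ∀ i, (L i).card ≤ C)
    (hTL : ∀ j ∈ Finset.Icc 1 n, T j ⊆ L j) (hm : C < (U n T).card) :
    ((passPairs C (fwdPairs n) L) n).card = C := by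
  obtain ⟨_, h2⟩ := fwd_inv C hL (n - 1)
  have hn1 : n - 1 + 1 = n := by omega
  rw [fwdPairs]
  rcases h2 with h | h
  · rwa [hn1] at h
  · exfalso
    rw [hn1] at h
    have hU : U n T ⊆ (passPairs C ((List.range (n - 1)).map (fun i => (i + 1, i + 2))) L) n := by
      intro u hu
      rw [U, Finset.mem_biUnion] at hu
      obtain ⟨j, hj, hu⟩ := hu
      have hj' := Finset.mem_Icc.mp hj
      exact h j (Finset.mem_Icc.mpr ⟨hj'.1, by omega⟩) (hTL j hj hu)
    have := Finset.card_le_card hU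
    have := passPairs_card C ((List.range (n - 1)).map (fun i => (i + 1, i + 2))) L hL n
    omega

lemma bwd_inv {F : ℕ → Finset ℕ} (hF : ∀ i, (F i).card ≤ C) (hFn : (F n).card = C) :
    ∀ k : ℕ, k ≤ n - 1 →
    ∀ i, n - k ≤ i → i ≤ n →
      ((passPairs C ((List.range k).map (fun i => (n - i, n - i - 1))) F) i).card = C := by
  intro k
  induction k with
  | zero =>
    intro _ i h1 h2
    have : i = n := by omega
    rw [this]
    exact hFn
  | succ k ih =>
    intro hk i h1 h2
    have hsplit : passPairs C ((List.range (k + 1)).map (fun i => (n - i, n - i - 1))) F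
        = Function.update (passPairs C ((List.range k).map (fun i => (n - i, n - i - 1))) F)
            (n - k - 1)
          (fillFrom C (passPairs C ((List.range k).map (fun i => (n - i, n - i - 1))) F (n - k))
            (passPairs C ((List.range k).map (fun i => (n - i, n - i - 1))) F (n - k - 1))) := by
      rw [List.range_succ, List.map_append]
      exact passPairs_append C _ _ F
    set B := passPairs C ((List.range k).map (fun i => (n - i, n - i - 1))) F with hB
    have hBcard : ∀ i, (B i).card ≤ C := passPairs_card C _ F hF
    rw [hsplit]
    by_cases hib : i = n - k - 1
    · rw [hib, Function.update_self, fillFrom_card (hBcard _)]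
      have hsrc : (B (n - k)).card = C := ih (by omega) (n - k) (le_refl _) (by omega)
      have : C ≤ (B (n - k - 1) ∪ B (n - k)).card := by
        calc C = (B (n - k)).card := hsrc.symm
        _ ≤ _ := Finset.card_le_card Finset.subset_union_right
      omega
    · rw [Function.update_of_ne hib]
      exact ih (by omega) i (by omega) h2

lemma toFullMag_card (hn : 1 ≤ n) (hL : ∀ i, (L i).card ≤ C)
    (hTL : ∀ j ∈ Finset.Icc 1 n, T j ⊆ L j) (hm : C < (U n T).card) :
    ∀ i ∈ Finset.Icc 1 n, ((toFullMag C n L) i).card = C := by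
  intro i hi
  rw [Finset.mem_Icc] at hi
  rw [toFullMag, bwdPairs]
  have hfwd : ∀ j, ((passPairs C (fwdPairs n) L) j).card ≤ C := passPairs_card C _ L hL
  exact bwd_inv n C hfwd (fwd_card n C T hn hL hTL hm) (n - 1) (le_refl _) i (by omega) hi.2

lemma toFullMag_good (hG : Good n T L) : Good n T (toFullMag C n L) := by
  rw [toFullMag]
  refine passPairs_good n C T _ _ ?_ (passPairs_good n C T _ _ ?_ hG)
  · intro p hp
    rw [bwdPairs, List.mem_map] at hp
    obtain ⟨i, hi, rfl⟩ := hp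
    rw [List.mem_range] at hi
    refine ⟨Finset.mem_Icc.mpr ⟨by omega, by omega⟩, Or.inr (by omega)⟩
  · intro p hp
    rw [fwdPairs, List.mem_map] at hp
    obtain ⟨i, hi, rfl⟩ := hp
    rw [List.mem_range] at hi
    refine ⟨Finset.mem_Icc.mpr ⟨by omega, by omega⟩, Or.inl (by omega)⟩

lemma toFullMag_mono : ∀ i, L i ⊆ toFullMag C n L i := by
  intro i
  rw [toFullMag]
  exact Finset.Subset.trans (passPairs_mono C _ L i) (passPairs_mono C _ _ i)

lemma toFullMag_subset (hLU : ∀ i, L i ⊆ U n T) : ∀ i, toFullMag C n L i ⊆ U n T := by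
  rw [toFullMag]
  exact passPairs_subset C _ _ _ (passPairs_subset C _ _ _ hLU)

lemma toFullMag_feasible (hn : 1 ≤ n) (hL : ∀ i, (L i).card ≤ C)
    (hTL : ∀ j ∈ Finset.Icc 1 n, T j ⊆ L j) (hLU : ∀ i, L i ⊆ U n T)
    (hm : C < (U n T).card) : Feasible C n T (toFullMag C n L) := by
  intro i hi
  exact ⟨Finset.Subset.trans (hTL i hi) (toFullMag_mono n C i),
    toFullMag_card n C T hn hL hTL hm i hi,
    toFullMag_subset n C T hLU i⟩

end Passes

section UpperCount
variable {M : ℕ → Finset ℕ}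

noncomputable def chargeU (M : ℕ → Finset ℕ) :
    ℕ ⊕ (((_ : ℕ) × ℕ) ⊕ ((ℕ × ℕ) × ℕ)) → (_ : ℕ) × ℕ
  | Sum.inl x => ⟨sInf {j | 1 ≤ j ∧ x ∈ T j ∧ ∀ k ∈ Finset.Icc 1 j, x ∈ M k}, x⟩
  | Sum.inr (Sum.inl w) =>
      ⟨sInf {j | w.1 + 1 ≤ j ∧ w.2 ∈ T j ∧ ∀ k ∈ Finset.Icc (w.1 + 1) j, w.2 ∈ M k}, w.2⟩
  | Sum.inr (Sum.inr c) => ⟨c.1.2, c.2⟩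

lemma upper_count (hn : 1 ≤ n) (hout : ∀ i, i ∉ Finset.Icc 1 n → T i = ∅)
    (hM : Feasible C n T M) (hG : Good n T M) :
    C + (switches n M + (pipeSet n T M).card) ≤ ∑ i ∈ Finset.Icc 1 n, (T i).card := by
  classical
  have hOcc : ∀ {j t : ℕ}, t ∈ T j → j ∈ Finset.Icc 1 n := by
    intro j t h
    by_contra hc
    rw [hout j hc] at h
    exact absurd h (Finset.notMem_empty t)
  have hMem : ∀ i ∈ Finset.Icc 1 n, ∀ t ∈ T i, t ∈ M i := fun i hi t ht => (hM i hi).1 ht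
  -- nonemptiness of the two kinds of charge sets
  have hQ1 : ∀ x ∈ M 1, {j | 1 ≤ j ∧ x ∈ T j ∧ ∀ k ∈ Finset.Icc 1 j, x ∈ M k}.Nonempty := by
    intro x hx
    rcases hG x 1 (Finset.mem_Icc.mpr ⟨le_refl _, hn⟩) hx with ⟨j, hj, hxj, hch⟩ | ⟨j, hj, hxj, hch⟩
    · have hj1 : j = 1 := by
        have := (Finset.mem_Icc.mp (hOcc hxj)).1
        omega
      subst hj1
      exact ⟨1, le_refl _, hxj, hch⟩
    · exact ⟨j, hj, hxj, hch⟩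
  have hQw : ∀ i u, 1 ≤ i → i ≤ n - 1 → u ∈ M (i + 1) → u ∉ M i →
      {j | i + 1 ≤ j ∧ u ∈ T j ∧ ∀ k ∈ Finset.Icc (i + 1) j, u ∈ M k}.Nonempty := by
    intro i u hi1 hin hu hnu
    rcases hG u (i + 1) (Finset.mem_Icc.mpr ⟨by omega, by omega⟩) hu with
      ⟨j, hj, huj, hch⟩ | ⟨j, hj, huj, hch⟩
    · by_cases hji : j ≤ i
      · exact absurd (hch i (Finset.mem_Icc.mpr ⟨hji, by omega⟩)) hnu
      · have : j = i + 1 := by omega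
        subst this
        exact ⟨i + 1, le_refl _, huj, hch⟩
    · exact ⟨j, hj, huj, hch⟩
  have key : ((M 1).disjSum ((swS n M).disjSum (pipeSet n T M))).card ≤ (occS n T).card := by
    refine Finset.card_le_card_of_injOn (chargeU T M) ?_ ?_
    · -- maps to
      intro z hz
      rw [Finset.mem_coe, Finset.mem_disjSum] at hz
      rw [Finset.mem_coe]
      rcases hz with ⟨x, hx, rfl⟩ | ⟨z1, hz1, rfl⟩
      · simp only [chargeU]
        obtain ⟨hj1, hxj, hch⟩ := Nat.sInf_mem (hQ1 x hx)
        rw [occS, Finset.mem_sigma]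
        exact ⟨hOcc hxj, hxj⟩
      · rw [Finset.mem_disjSum] at hz1
        rcases hz1 with ⟨w, hw, rfl⟩ | ⟨c, hc, rfl⟩
        · obtain ⟨i, u⟩ := w
          simp only [swS, Finset.mem_sigma, Finset.mem_Icc, Finset.mem_sdiff] at hw
          obtain ⟨⟨hi1, hin⟩, hu, hnu⟩ := hw
          simp only [chargeU]
          obtain ⟨hj1, huj, hch⟩ := Nat.sInf_mem (hQw i u hi1 hin hu hnu)
          rw [occS, Finset.mem_sigma]
          exact ⟨hOcc huj, huj⟩
        · simp only [chargeU]
          obtain ⟨h1, h2, h3, h4, h5, _⟩ := (mem_pipeSet n T).mp hc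
          rw [occS, Finset.mem_sigma]
          have hmem : c.1.2 ∈ Finset.Icc 1 n := Finset.mem_Icc.mpr ⟨by omega, h3⟩
          exact ⟨hmem, h5⟩
    · -- injectivity
      intro z hz z' hz' heq
      rw [Finset.mem_coe, Finset.mem_disjSum] at hz hz'
      -- helper : the "A beats W" contradiction
      have hAW : ∀ x i u, x ∈ M 1 → 1 ≤ i → i ≤ n - 1 → u ∈ M (i + 1) → u ∉ M i →
          chargeU T M (Sum.inl x) = chargeU T M (Sum.inr (Sum.inl ⟨i, u⟩)) → False := by
        intro x i u hx hi1 hin hu hnu he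
        simp only [chargeU] at he
        injection he with h1 h2
        subst h2
        obtain ⟨ha1, haj, hach⟩ := Nat.sInf_mem (hQ1 _ hx)
        obtain ⟨hb1, hbj, hbch⟩ := Nat.sInf_mem (hQw i _ hi1 hin hu hnu)
        refine hnu (hach i (Finset.mem_Icc.mpr ⟨hi1, ?_⟩))
        omega
      have hAP : ∀ x c, x ∈ M 1 → c ∈ pipeSet n T M →
          chargeU T M (Sum.inl x) = chargeU T M (Sum.inr (Sum.inr c)) → False := by
        intro x c hx hc he
        simp only [chargeU] at he
        injection he with h1 h2
        subst h2
        obtain ⟨hs1, hse, hen, hts, hte, hint⟩ := (mem_pipeSet n T).mp hc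
        obtain ⟨ha1, haj, hach⟩ := Nat.sInf_mem (hQ1 _ hx)
        have hmem : c.1.1 ∈ {j | 1 ≤ j ∧ c.2 ∈ T j ∧ ∀ k ∈ Finset.Icc 1 j, c.2 ∈ M k} := by
          refine ⟨hs1, hts, fun k hk => ?_⟩
          rw [Finset.mem_Icc] at hk
          exact hach k (Finset.mem_Icc.mpr ⟨hk.1, by omega⟩)
        have := Nat.sInf_le hmem
        omega
      have hWP : ∀ i u c, 1 ≤ i → i ≤ n - 1 → u ∈ M (i + 1) → u ∉ M i →
          c ∈ pipeSet n T M →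
          chargeU T M (Sum.inr (Sum.inl ⟨i, u⟩)) = chargeU T M (Sum.inr (Sum.inr c)) → False := by
        intro i u c hi1 hin hu hnu hc he
        simp only [chargeU] at he
        injection he with h1 h2
        subst h2
        obtain ⟨hs1, hse, hen, hts, hte, hint⟩ := (mem_pipeSet n T).mp hc
        obtain ⟨hb1, hbj, hbch⟩ := Nat.sInf_mem (hQw i _ hi1 hin hu hnu)
        rcases Nat.lt_trichotomy c.1.1 i with hlt | heq2 | hgt
        · -- s < i : i is interior, so u ∈ M i, contradiction
          exact hnu (hint i (Finset.mem_Ioo.mpr ⟨hlt, by omega⟩)).2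
        · -- s = i : u ∈ T i ⊆ M i
          refine hnu (hMem i (Finset.mem_Icc.mpr ⟨by omega, by omega⟩) c.2 ?_)
          rw [← heq2]
          exact hts
        · -- s > i : s qualifies for the sInf, so sInf ≤ s < e
          have hmem : c.1.1 ∈ {j | i + 1 ≤ j ∧ c.2 ∈ T j ∧ ∀ k ∈ Finset.Icc (i + 1) j, c.2 ∈ M k} := by
            refine ⟨by omega, hts, fun k hk => ?_⟩
            rw [Finset.mem_Icc] at hk
            exact hbch k (Finset.mem_Icc.mpr ⟨hk.1, by omega⟩)
          have := Nat.sInf_le hmem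
          omega
      rcases hz with ⟨x, hx, rfl⟩ | ⟨z1, hz1, rfl⟩
      · rcases hz' with ⟨x', hx', rfl⟩ | ⟨z1', hz1', rfl⟩
        · simp only [chargeU] at heq
          injection heq with h1 h2
          rw [h2]
        · rw [Finset.mem_disjSum] at hz1'
          rcases hz1' with ⟨w, hw, rfl⟩ | ⟨c, hc, rfl⟩
          · obtain ⟨i, u⟩ := w
            simp only [swS, Finset.mem_sigma, Finset.mem_Icc, Finset.mem_sdiff] at hw
            exact absurd (hAW x i u hx hw.1.1 hw.1.2 hw.2.1 hw.2.2 heq) not_false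
          · exact absurd (hAP x c hx hc heq) not_false
      · rw [Finset.mem_disjSum] at hz1
        rcases hz1 with ⟨w, hw, rfl⟩ | ⟨c, hc, rfl⟩
        · obtain ⟨i, u⟩ := w
          simp only [swS, Finset.mem_sigma, Finset.mem_Icc, Finset.mem_sdiff] at hw
          obtain ⟨⟨hi1, hin⟩, hu, hnu⟩ := hw
          rcases hz' with ⟨x', hx', rfl⟩ | ⟨z1', hz1', rfl⟩
          · exact absurd (hAW x' i u hx' hi1 hin hu hnu heq.symm) not_false
          · rw [Finset.mem_disjSum] at hz1'
            rcases hz1' with ⟨w', hw', rfl⟩ | ⟨c, hc, rfl⟩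
            · obtain ⟨i', u'⟩ := w'
              simp only [swS, Finset.mem_sigma, Finset.mem_Icc, Finset.mem_sdiff] at hw'
              obtain ⟨⟨hi1', hin'⟩, hu', hnu'⟩ := hw'
              simp only [chargeU] at heq
              injection heq with h1 h2
              subst h2
              obtain ⟨hb1, hbj, hbch⟩ := Nat.sInf_mem (hQw i _ hi1 hin hu hnu)
              obtain ⟨hb1', hbj', hbch'⟩ := Nat.sInf_mem (hQw i' _ hi1' hin' hu' hnu')
              rcases Nat.lt_trichotomy i i' with hlt | heq2 | hgt
              · exact absurd (hbch i' (Finset.mem_Icc.mpr ⟨by omega, by omega⟩)) hnu'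
              · rw [heq2]
              · exact absurd (hbch' i (Finset.mem_Icc.mpr ⟨by omega, by omega⟩)) hnu
            · exact absurd (hWP i u c hi1 hin hu hnu hc heq) not_false
        · rcases hz' with ⟨x', hx', rfl⟩ | ⟨z1', hz1', rfl⟩
          · exact absurd (hAP x' c hx' hc heq.symm) not_false
          · rw [Finset.mem_disjSum] at hz1'
            rcases hz1' with ⟨w', hw', rfl⟩ | ⟨c', hc', rfl⟩
            · obtain ⟨i', u'⟩ := w'
              simp only [swS, Finset.mem_sigma, Finset.mem_Icc, Finset.mem_sdiff] at hw'
              obtain ⟨⟨hi1', hin'⟩, hu', hnu'⟩ := hw'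
              exact absurd (hWP i' u' c hi1' hin' hu' hnu' hc heq.symm) not_false
            · simp only [chargeU] at heq
              injection heq with h1 h2
              obtain ⟨hs1, hse, hen, hts, hte, hint⟩ := (mem_pipeSet n T).mp hc
              obtain ⟨hs1', hse', hen', hts', hte', hint'⟩ := (mem_pipeSet n T).mp hc'
              have hss : c.1.1 = c'.1.1 := by
                rcases Nat.lt_trichotomy c.1.1 c'.1.1 with hlt | heq2 | hgt
                · rw [← h2] at hts'
                  exact absurd hts' ((hint _ (Finset.mem_Ioo.mpr ⟨hlt, by omega⟩)).1)
                · exact heq2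
                · rw [h2] at hts
                  exact absurd hts ((hint' _ (Finset.mem_Ioo.mpr ⟨hgt, by omega⟩)).1)
              have hcc : c = c' := by
                refine Prod.ext (Prod.ext hss h1) h2
              rw [hcc]
  rw [occS_card, Finset.card_disjSum, Finset.card_disjSum, swS_card] at key
  have h1 : (M 1).card = C := (hM 1 (Finset.mem_Icc.mpr ⟨le_refl _, hn⟩)).2.1
  omega

end UpperCount

lemma stmt2 (hn : 1 ≤ n) (hout : ∀ i, i ∉ Finset.Icc 1 n → T i = ∅)
    (hTc : ∀ i ∈ Finset.Icc 1 n, (T i).card ≤ C)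
    (hm : C < (U n T).card) :
    sInf {k | ∃ M, Feasible C n T M ∧ switches n M = k}
        = (∑ i ∈ Finset.Icc 1 n, (T i).card) - C - (pipeSet n T (GPCA C n T)).card := by
  obtain ⟨hGP, hAGC⟩ := GPCA_eq n C T hout
  have hT' : SelFeas C T (∅ : Finset ((ℕ × ℕ) × ℕ)) := by
    intro i
    rw [cov]
    simp only [Finset.filter_empty, Finset.card_empty, add_zero]
    by_cases h : i ∈ Finset.Icc 1 n
    · exact hTc i h
    · rw [hout i h]; simp
  have hAGfeas : SelFeas C T (AG n C T) := sel_feas C T _ ∅ hT'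
  have hpipesAG : pipeSet n T (GPCA C n T) = AG n C T := by
    rw [hGP]
    exact pipeSet_mag_eq n T hAGC
      (fun c hc hioo => mem_sel_of_empty_interior C T _ ∅ c (Cand_subset_ordCands n T c hc) hioo)
  have hbound : ∀ M : ℕ → Finset ℕ, Feasible C n T M →
      (pipeSet n T M).card ≤ (AG n C T).card := by
    intro M hM
    refine greedy_opt C T (ordCands n T) ∅ (pipeSet n T M) (ordCands_sorted n T)
      (pipeSet_feas_of_feasible n C T hTc hout hM) (Finset.empty_subset _) ?_
    intro c hc
    exact Finset.mem_union_right _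
      (List.mem_toFinset.mpr (Cand_subset_ordCands n T c (pipeSet_subset_Cand n T M hc)))
  -- facts about L := GPCA C n T
  have hLcard : ∀ i, ((GPCA C n T) i).card ≤ C := by
    intro i
    rw [hGP, mag_card n T hAGC]
    exact hAGfeas i
  have hTL : ∀ j ∈ Finset.Icc 1 n, T j ⊆ (GPCA C n T) j := by
    intro j _
    rw [hGP]
    exact Finset.subset_union_left
  have hLU : ∀ i, (GPCA C n T) i ⊆ U n T := by
    rw [hGP]
    exact mag_subset_U n T hout hAGC
  have hLgood : Good n T (GPCA C n T) := by
    rw [hGP]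
    exact good_mag n T hAGC
  -- the completed magazine sequence
  have hMfeas : Feasible C n T (toFullMag C n (GPCA C n T)) :=
    toFullMag_feasible n C T hn hLcard hTL hLU hm
  have hMgood : Good n T (toFullMag C n (GPCA C n T)) := toFullMag_good n C T hLgood
  have hMpipes : (pipeSet n T (toFullMag C n (GPCA C n T))).card
      = (pipeSet n T (GPCA C n T)).card := by
    rw [hpipesAG]
    refine le_antisymm (hbound _ hMfeas) ?_
    rw [← hpipesAG]
    exact Finset.card_le_card (pipeSet_mono n T (toFullMag_mono n C))
  set p := (pipeSet n T (GPCA C n T)).card with hp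
  have hlow : ∀ M : ℕ → Finset ℕ, Feasible C n T M →
      (∑ i ∈ Finset.Icc 1 n, (T i).card) - C - p ≤ switches n M := by
    intro M hM
    have h1 := lower_count n C T hn hout hM
    have h2 : (pipeSet n T M).card ≤ p := by
      rw [hp, hpipesAG]
      exact hbound M hM
    omega
  have hup := upper_count n C T hn hout hMfeas hMgood
  rw [hMpipes] at hup
  have heqM : switches n (toFullMag C n (GPCA C n T))
      = (∑ i ∈ Finset.Icc 1 n, (T i).card) - C - p := by
    have := hlow _ hMfeas
    omega
  apply le_antisymm
  · exact Nat.sInf_le ⟨toFullMag C n (GPCA C n T), hMfeas, heqM⟩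
  · refine le_csInf ⟨_, toFullMag C n (GPCA C n T), hMfeas, heqM⟩ ?_
    rintro k ⟨M, hM, rfl⟩
    exact hlow M hM

end Gpca

/-- Theorem 2, statement 1 (correctness of GPCA): the greedy pipe construction algorithm
realizes the maximum possible number of pipes, hence the minimum number of switches over
all feasible full-magazine sequences is `∑|T i| − C − GPCA(T;C)`. -/
theorem gpca_correct (n C : ℕ) (T : ℕ → Finset ℕ) (hn : 1 ≤ n)
    (hout : ∀ i, i ∉ Finset.Icc 1 n → T i = ∅)
    (hTc : ∀ i ∈ Finset.Icc 1 n, (T i).card ≤ C)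
    (hm : C < ((Finset.Icc 1 n).biUnion T).card) :
    (pipeSet n T (GPCA C n T)).card
        = sSup {k | ∃ M, Feasible C n T M ∧ (pipeSet n T M).card = k} ∧
    sInf {k | ∃ M, Feasible C n T M ∧ switches n M = k}
        = (∑ i ∈ Finset.Icc 1 n, (T i).card) - C - (pipeSet n T (GPCA C n T)).card :=
  ⟨Gpca.stmt1 n C T hn hout hTc hm, Gpca.stmt2 n C T hn hout hTc hm⟩
end

section
/- Optimal solution of the Tool Loading Problem (Theorem 2, statement 2): the sequence ToFullMag(GPCA(T_1,…,T_n;C)) is a feasible full-magazine sequence attaining the minimum number of tool switches: ToFullMag(GPCA(T_1,…,T_n;C)) ∈ argmin{switches(M) : M ∈ M}. -/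
namespace TLPAux

abbrev Item := ℕ × ℕ × ℕ   -- (tool, s, e)

def igap (g : Item) : Finset ℕ := Finset.Ioo g.2.1 g.2.2

def cov (S : Finset Item) (j : ℕ) : ℕ := (S.filter (fun g => j ∈ igap g)).card

def Fits (cap : ℕ → ℕ) (S : Finset Item) (g : Item) : Prop := ∀ j ∈ igap g, cov S j < cap j

instance (cap : ℕ → ℕ) (S : Finset Item) (g : Item) : Decidable (Fits cap S g) := by
  unfold Fits; infer_instance

def grun (cap : ℕ → ℕ) (S : Finset Item) (L : List Item) : Finset Item :=
  L.foldl (fun S g => if Fits cap S g then insert g S else S) S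

def Feas (cap : ℕ → ℕ) (S : Finset Item) : Prop := ∀ j, cov S j ≤ cap j

lemma cov_mono {S T : Finset Item} (h : S ⊆ T) (j : ℕ) : cov S j ≤ cov T j :=
  Finset.card_le_card (Finset.filter_subset_filter _ h)

lemma cov_insert {S : Finset Item} {g : Item} (hg : g ∉ S) (j : ℕ) :
    cov (insert g S) j = cov S j + if j ∈ igap g then 1 else 0 := by
  unfold cov
  rw [Finset.filter_insert]
  split <;> rename_i hj
  · rw [Finset.card_insert_of_notMem (fun hc => hg (Finset.mem_filter.1 hc).1)]
  · simp [hj]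


lemma cov_insert_le {S : Finset Item} {g : Item} (j : ℕ) :
    cov (insert g S) j ≤ cov S j + 1 := by
  by_cases hg : g ∈ S
  · simp [Finset.insert_eq_self.2 hg]
  · rw [cov_insert hg]; split <;> omega

lemma cov_erase_add_one {S : Finset Item} {h : Item} (hh : h ∈ S) {j : ℕ} (hj : j ∈ igap h) :
    cov (S.erase h) j + 1 = cov S j := by
  unfold cov
  rw [Finset.filter_erase, Finset.card_erase_of_mem (Finset.mem_filter.2 ⟨hh, hj⟩)]
  have : 0 < (S.filter (fun g => j ∈ igap g)).card :=
    Finset.card_pos.2 ⟨h, Finset.mem_filter.2 ⟨hh, hj⟩⟩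
  omega

lemma cov_erase_le {S : Finset Item} {h : Item} (j : ℕ) : cov (S.erase h) j ≤ cov S j :=
  cov_mono (Finset.erase_subset _ _) j

lemma grun_cons (cap : ℕ → ℕ) (S : Finset Item) (g : Item) (L : List Item) :
    grun cap S (g :: L) = grun cap (if Fits cap S g then insert g S else S) L := rfl

lemma subset_grun (cap : ℕ → ℕ) (S : Finset Item) (L : List Item) : S ⊆ grun cap S L := by
  induction L generalizing S with
  | nil => exact Finset.Subset.refl _
  | cons g L ih =>
    rw [grun_cons]
    refine Finset.Subset.trans ?_ (ih _)
    split
    · exact Finset.subset_insert _ _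
    · exact Finset.Subset.refl _

lemma grun_subset (cap : ℕ → ℕ) (S : Finset Item) (L : List Item) :
    grun cap S L ⊆ S ∪ L.toFinset := by
  induction L generalizing S with
  | nil => simp [grun]
  | cons g L ih =>
    rw [grun_cons]
    refine Finset.Subset.trans (ih _) ?_
    intro x hx
    rcases Finset.mem_union.1 hx with hx | hx
    · split at hx
      · rcases Finset.mem_insert.1 hx with rfl | hx
        · simp
        · exact Finset.mem_union_left _ hx
      · exact Finset.mem_union_left _ hx
    · simp only [List.toFinset_cons]
      exact Finset.mem_union_right _ (Finset.mem_insert_of_mem hx)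

lemma grun_feas {cap : ℕ → ℕ} {S : Finset Item} (hS : Feas cap S) (L : List Item) :
    Feas cap (grun cap S L) := by
  induction L generalizing S with
  | nil => exact hS
  | cons g L ih =>
    rw [grun_cons]
    apply ih
    split <;> rename_i hf
    · intro j
      by_cases hj : j ∈ igap g
      · calc cov (insert g S) j ≤ cov S j + 1 := cov_insert_le j
          _ ≤ cap j := hf j hj
      · by_cases hg : g ∈ S
        · simpa [Finset.insert_eq_self.2 hg] using hS j
        · rw [cov_insert hg]; simp [hj, hS j]
    · exact hS

lemma mem_grun_of_empty {cap : ℕ → ℕ} {g : Item} (hg : igap g = ∅) :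
    ∀ (L : List Item) (S : Finset Item), g ∈ L → g ∈ grun cap S L := by
  intro L
  induction L with
  | nil => intro S h; simp at h
  | cons a L ih =>
    intro S h
    rcases List.mem_cons.1 h with rfl | h
    · by_cases hF : Fits cap S g
      · rw [grun_cons, if_pos hF]
        exact subset_grun _ _ _ (Finset.mem_insert_self _ _)
      · exact absurd (fun j hj => by rw [hg] at hj; exact absurd hj (Finset.notMem_empty j)) hF
    · rw [grun_cons]; exact ih _ h

/-- The greedy exchange argument: greedy over a list sorted by right endpoints is optimal. -/
theorem grun_opt (cap : ℕ → ℕ) :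
    ∀ (L : List Item), L.Pairwise (fun a b => a.2.2 ≤ b.2.2) →
    ∀ (S Q : Finset Item), Feas cap Q → S ⊆ Q → Q \ S ⊆ L.toFinset →
    Q.card ≤ (grun cap S L).card := by
  intro L
  induction L with
  | nil =>
    intro _ S Q _ hSQ hQS
    simp only [List.toFinset_nil, Finset.subset_empty, Finset.sdiff_eq_empty_iff_subset] at hQS
    exact Finset.card_le_card hQS
  | cons g L ih =>
    intro hsort S Q hQfeas hSQ hQL
    have hsort' : L.Pairwise (fun a b => a.2.2 ≤ b.2.2) := hsort.of_cons
    have hgle : ∀ h ∈ L, g.2.2 ≤ h.2.2 := fun _ hh => List.rel_of_pairwise_cons hsort hh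
    rw [grun_cons]
    by_cases hF : Fits cap S g
    · rw [if_pos hF]
      by_cases hgQ : g ∈ Q
      · -- g already in Q
        apply ih hsort' (insert g S) Q hQfeas (Finset.insert_subset hgQ hSQ)
        intro x hx
        have hx' := Finset.mem_sdiff.1 hx
        have hxg : x ≠ g := fun h => hx'.2 (h ▸ Finset.mem_insert_self g S)
        have : x ∈ (g :: L).toFinset := hQL (Finset.mem_sdiff.2 ⟨hx'.1, fun h => hx'.2 (Finset.mem_insert_of_mem h)⟩)
        simp only [List.toFinset_cons, Finset.mem_insert] at this
        exact this.resolve_left hxg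
      · -- g not in Q : exchange
        set Sat := (igap g).filter (fun j => cap j ≤ cov Q j) with hSatdef
        by_cases hSat : Sat = ∅
        · -- can add g to Q freely
          have hfeas' : Feas cap (insert g Q) := by
            intro j
            by_cases hj : j ∈ igap g
            · have : ¬ cap j ≤ cov Q j := by
                intro hc
                exact (Finset.notMem_empty j) (hSat ▸ Finset.mem_filter.2 ⟨hj, hc⟩)
              calc cov (insert g Q) j ≤ cov Q j + 1 := cov_insert_le j
                _ ≤ cap j := by omega
            · rw [cov_insert hgQ]; simpa [hj] using hQfeas j
          have := ih hsort' (insert g S) (insert g Q) hfeas'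
            (Finset.insert_subset_insert _ hSQ) ?_
          · calc Q.card ≤ (insert g Q).card := Finset.card_le_card (Finset.subset_insert _ _)
              _ ≤ _ := this
          · intro x hx
            have hx' := Finset.mem_sdiff.1 hx
            have hxg : x ≠ g := fun h => hx'.2 (h ▸ Finset.mem_insert_self g S)
            have hxQ : x ∈ Q := (Finset.mem_insert.1 hx'.1).resolve_left hxg
            have : x ∈ (g :: L).toFinset := hQL (Finset.mem_sdiff.2 ⟨hxQ, fun h => hx'.2 (Finset.mem_insert_of_mem h)⟩)
            simp only [List.toFinset_cons, Finset.mem_insert] at this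
            exact this.resolve_left hxg
        · -- exchange with some h
          have hSatne : Sat.Nonempty := Finset.nonempty_iff_ne_empty.2 hSat
          set j := Sat.min' hSatne with hjdef
          have hjSat : j ∈ Sat := Finset.min'_mem _ _
          have hjgap : j ∈ igap g := (Finset.mem_filter.1 hjSat).1
          have hjcov : cap j ≤ cov Q j := (Finset.mem_filter.1 hjSat).2
          have hjS : cov S j < cap j := hF j hjgap
          -- find h ∈ Q \ S with j ∈ igap h
          have hexists : ∃ h ∈ Q, h ∉ S ∧ j ∈ igap h := by
            by_contra hc
            push_neg at hc
            have : Q.filter (fun g => j ∈ igap g) ⊆ S.filter (fun g => j ∈ igap g) := by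
              intro x hx
              have hx' := Finset.mem_filter.1 hx
              exact Finset.mem_filter.2 ⟨by_contra fun hxS => (hc x hx'.1 hxS) hx'.2, hx'.2⟩
            have : cov Q j ≤ cov S j := Finset.card_le_card this
            omega
          obtain ⟨h, hhQ, hhS, hjh⟩ := hexists
          have hhg : h ≠ g := fun e => hgQ (e ▸ hhQ)
          have hhL : h ∈ L := by
            have : h ∈ (g :: L).toFinset := hQL (Finset.mem_sdiff.2 ⟨hhQ, hhS⟩)
            simp only [List.toFinset_cons, Finset.mem_insert] at this
            exact List.mem_toFinset.1 (this.resolve_left hhg)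
          have hee : g.2.2 ≤ h.2.2 := hgle h hhL
          set Q' := insert g (Q.erase h) with hQ'def
          have hgQe : g ∉ Q.erase h := fun hc => hgQ (Finset.mem_of_mem_erase hc)
          have hcard : Q'.card = Q.card := by
            rw [hQ'def, Finset.card_insert_of_notMem hgQe, Finset.card_erase_of_mem hhQ]
            have : 0 < Q.card := Finset.card_pos.2 ⟨h, hhQ⟩
            omega
          have hfeas' : Feas cap Q' := by
            intro j'
            by_cases hjh' : j' ∈ igap h
            · have h1 := cov_erase_add_one hhQ hjh'
              calc cov Q' j' ≤ cov (Q.erase h) j' + 1 := cov_insert_le j'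
                _ = cov Q j' := h1
                _ ≤ cap j' := hQfeas j'
            · by_cases hjg' : j' ∈ igap g
              · -- j' < j, hence unsaturated
                have hj'lt : j' < j := by
                  simp only [igap, Finset.mem_Ioo] at hjg' hjh hjh' ⊢
                  push_neg at hjh'
                  have : j' < g.2.2 := hjg'.2
                  have hj'le : j' ≤ h.2.1 := by
                    by_contra hc
                    push_neg at hc
                    exact absurd (hjh' hc) (by omega)
                  omega
                have : j' ∉ Sat := fun hc => absurd (Finset.min'_le _ _ hc) (by omega)
                have hunsat : cov Q j' < cap j' := by
                  by_contra hc
                  push_neg at hc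
                  exact this (Finset.mem_filter.2 ⟨hjg', hc⟩)
                calc cov Q' j' ≤ cov (Q.erase h) j' + 1 := cov_insert_le j'
                  _ ≤ cov Q j' + 1 := by have := cov_erase_le (S := Q) (h := h) j'; omega
                  _ ≤ cap j' := hunsat
              · rw [hQ'def, cov_insert hgQe]
                simp only [hjg', if_false, add_zero]
                calc cov (Q.erase h) j' ≤ cov Q j' := cov_erase_le j'
                  _ ≤ cap j' := hQfeas j'
          have hsub : insert g S ⊆ Q' := by
            refine Finset.insert_subset (Finset.mem_insert_self _ _) ?_
            intro x hx
            refine Finset.mem_insert_of_mem (Finset.mem_erase.2 ⟨fun e => hhS (e ▸ hx), hSQ hx⟩)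
          have := ih hsort' (insert g S) Q' hfeas' hsub ?_
          · omega
          · intro x hx
            have hx' := Finset.mem_sdiff.1 hx
            have hxg : x ≠ g := fun e => hx'.2 (e ▸ Finset.mem_insert_self g S)
            have hxQ : x ∈ Q := Finset.mem_of_mem_erase ((Finset.mem_insert.1 hx'.1).resolve_left hxg)
            have hxS : x ∉ S := fun hc => hx'.2 (Finset.mem_insert_of_mem hc)
            have : x ∈ (g :: L).toFinset := hQL (Finset.mem_sdiff.2 ⟨hxQ, hxS⟩)
            simp only [List.toFinset_cons, Finset.mem_insert] at this
            exact this.resolve_left hxg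
    · -- greedy rejects g
      rw [if_neg hF]
      apply ih hsort' S Q hQfeas hSQ
      intro x hx
      have hx' := Finset.mem_sdiff.1 hx
      have : x ∈ (g :: L).toFinset := hQL hx
      simp only [List.toFinset_cons, Finset.mem_insert] at this
      rcases this with rfl | hxL
      · -- x = g ∈ Q \ S is impossible
        exfalso
        unfold Fits at hF
        push_neg at hF
        obtain ⟨j, hjgap, hjcov⟩ := hF
        have h1 : cov S j < cov Q j := by
          have hsub : S.filter (fun g => j ∈ igap g) ⊂ Q.filter (fun g => j ∈ igap g) := by
            refine Finset.ssubset_iff_of_subset (Finset.filter_subset_filter _ hSQ) |>.2 ?_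
            exact ⟨x, Finset.mem_filter.2 ⟨hx'.1, hjgap⟩, fun hc => hx'.2 (Finset.mem_filter.1 hc).1⟩
          exact Finset.card_lt_card hsub
        have := hQfeas j
        omega
      · exact hxL

end TLPAux

-- PART 2: instance definitions and GPCA lockstep
namespace TLPAux

theorem natmax?_some {l : List ℕ} {a : ℕ} (h : l.max? = some a) : a ∈ l ∧ ∀ b ∈ l, b ≤ a := by
  rw [List.max?_eq_some_iff] at h
  exact h

def prevOcc (T : ℕ → Finset ℕ) (t e : ℕ) : Option ℕ :=
  ((List.range e).filter (fun s => decide (t ∈ T s))).max?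

lemma prevOcc_spec {T : ℕ → Finset ℕ} {t e s : ℕ} (h : prevOcc T t e = some s) :
    t ∈ T s ∧ s < e ∧ ∀ i, s < i → i < e → t ∉ T i := by
  obtain ⟨hmem, hmax⟩ := natmax?_some h
  rw [List.mem_filter, List.mem_range] at hmem
  refine ⟨by simpa using hmem.2, hmem.1, ?_⟩
  intro i hsi hie hti
  have : i ≤ s := hmax i (by rw [List.mem_filter, List.mem_range]; exact ⟨hie, by simpa using hti⟩)
  omega

lemma prevOcc_isSome {T : ℕ → Finset ℕ} {t e s0 : ℕ} (h0 : s0 < e) (ht : t ∈ T s0) :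
    ∃ s, prevOcc T t e = some s := by
  cases hp : prevOcc T t e with
  | some s => exact ⟨s, rfl⟩
  | none =>
    exfalso
    rw [prevOcc, List.max?_eq_none_iff] at hp
    have : s0 ∈ (List.range e).filter (fun s => decide (t ∈ T s)) := by
      rw [List.mem_filter, List.mem_range]; exact ⟨h0, by simpa using ht⟩
    rw [hp] at this
    simp at this

def rawList (n : ℕ) (T : ℕ → Finset ℕ) : List (ℕ × ℕ) :=
  (List.range n).flatMap (fun e1 => ((T (e1+1)).sort (· ≤ ·)).map (fun t => (e1+1, t)))

def itemsOf (T : ℕ → Finset ℕ) (p : ℕ × ℕ) : List Item :=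
  match prevOcc T p.2 p.1 with
  | none => []
  | some s => [(p.2, s, p.1)]

def itemList (n : ℕ) (T : ℕ → Finset ℕ) : List Item := (rawList n T).flatMap (itemsOf T)

def capf (C : ℕ) (T : ℕ → Finset ℕ) (i : ℕ) : ℕ := C - (T i).card

def AccS (n C : ℕ) (T : ℕ → Finset ℕ) : Finset Item := grun (capf C T) ∅ (itemList n T)

def toolsAt (S : Finset Item) (i : ℕ) : Finset ℕ :=
  (S.filter (fun g => i ∈ igap g)).image (fun g => g.1)

def ValidI (n : ℕ) (T : ℕ → Finset ℕ) (g : Item) : Prop :=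
  g.1 ∈ T g.2.1 ∧ g.1 ∈ T g.2.2 ∧ g.2.1 < g.2.2 ∧ 1 ≤ g.2.1 ∧ g.2.2 ≤ n ∧
    ∀ i ∈ Finset.Ioo g.2.1 g.2.2, g.1 ∉ T i

lemma valid_unique {n : ℕ} {T : ℕ → Finset ℕ} {g h : Item}
    (hg : ValidI n T g) (hh : ValidI n T h) (htool : g.1 = h.1)
    {j : ℕ} (hjg : j ∈ igap g) (hjh : j ∈ igap h) : g = h := by
  obtain ⟨g1, ⟨gs, ge⟩⟩ := g
  obtain ⟨h1, ⟨hs, he⟩⟩ := h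
  simp only [igap, Finset.mem_Ioo] at hjg hjh
  obtain ⟨hg1, hg2, hg3, hg4, hg5, hg6⟩ := hg
  obtain ⟨hh1, hh2, hh3, hh4, hh5, hh6⟩ := hh
  simp only at *
  subst htool
  have hee : ge = he := by
    by_contra hne
    rcases Nat.lt_or_ge ge he with hlt | hge
    · exact hh6 ge (Finset.mem_Ioo.2 ⟨by omega, hlt⟩) hg2
    · exact hg6 he (Finset.mem_Ioo.2 ⟨by omega, by omega⟩) hh2
  subst hee
  have hss : gs = hs := by
    by_contra hne
    rcases Nat.lt_or_ge gs hs with hlt | hge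
    · exact hg6 hs (Finset.mem_Ioo.2 ⟨hlt, by omega⟩) hh1
    · exact hh6 gs (Finset.mem_Ioo.2 ⟨by omega, by omega⟩) hg1
  subst hss
  rfl

lemma mem_toolsAt {S : Finset Item} {i t : ℕ} :
    t ∈ toolsAt S i ↔ ∃ g ∈ S, g.1 = t ∧ i ∈ igap g := by
  simp only [toolsAt, Finset.mem_image, Finset.mem_filter]
  constructor
  · rintro ⟨g, ⟨hgS, hgi⟩, rfl⟩; exact ⟨g, hgS, rfl, hgi⟩
  · rintro ⟨g, hgS, rfl, hgi⟩; exact ⟨g, ⟨hgS, hgi⟩, rfl⟩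

lemma toolsAt_card {n : ℕ} {T : ℕ → Finset ℕ} {S : Finset Item}
    (hS : ∀ g ∈ S, ValidI n T g) (i : ℕ) : (toolsAt S i).card = cov S i := by
  apply Finset.card_image_of_injOn
  intro g hg h hh htool
  have hg' := Finset.mem_filter.1 hg
  have hh' := Finset.mem_filter.1 hh
  exact valid_unique (hS g hg'.1) (hS h hh'.1) htool hg'.2 hh'.2

lemma toolsAt_disjoint {n : ℕ} {T : ℕ → Finset ℕ} {S : Finset Item}
    (hS : ∀ g ∈ S, ValidI n T g) (i : ℕ) : Disjoint (T i) (toolsAt S i) := by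
  rw [Finset.disjoint_right]
  intro t ht hti
  obtain ⟨g, hgS, rfl, hgi⟩ := mem_toolsAt.1 ht
  exact (hS g hgS).2.2.2.2.2 i hgi hti

lemma foldl_flatMap {α β γ : Type*} (f : α → List β) (g : γ → β → γ) (l : List α) (b : γ) :
    (l.flatMap f).foldl g b = l.foldl (fun b a => (f a).foldl g b) b := by
  induction l generalizing b with
  | nil => rfl
  | cons a l ih => rw [List.flatMap_cons, List.foldl_append, ih, List.foldl_cons]

lemma GPCA_eq (n C : ℕ) (T : ℕ → Finset ℕ) :
    GPCA C n T = (rawList n T).foldl (fun M p => gpcaStep C T p.1 M p.2) T := by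
  rw [rawList, foldl_flatMap, GPCA]
  congr 1
  funext M e1
  rw [List.foldl_map]

lemma mem_rawList {n : ℕ} {T : ℕ → Finset ℕ} {p : ℕ × ℕ} :
    p ∈ rawList n T ↔ 1 ≤ p.1 ∧ p.1 ≤ n ∧ p.2 ∈ T p.1 := by
  simp only [rawList, List.mem_flatMap, List.mem_range, List.mem_map]
  constructor
  · rintro ⟨e1, he1, t, ht, rfl⟩
    exact ⟨by omega, by omega, by simpa using (Finset.mem_sort _).1 ht⟩
  · rintro ⟨h1, h2, h3⟩
    exact ⟨p.1 - 1, by omega, p.2, by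
      rw [Finset.mem_sort]
      convert h3 using 2 <;> omega, by
      obtain ⟨a, b⟩ := p
      simp only at *
      congr 1
      omega⟩

def InvGP (n C : ℕ) (T : ℕ → Finset ℕ) (M : ℕ → Finset ℕ) (S : Finset Item) : Prop :=
  (∀ i, M i = T i ∪ toolsAt S i) ∧ (∀ g ∈ S, ValidI n T g)

lemma card_of_inv {n C : ℕ} {T : ℕ → Finset ℕ} {M : ℕ → Finset ℕ} {S : Finset Item}
    (h : InvGP n C T M S) (i : ℕ) : (M i).card = (T i).card + cov S i := by
  rw [h.1 i, Finset.card_union_of_disjoint (toolsAt_disjoint h.2 i), toolsAt_card h.2 i]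

lemma lockstep (n C : ℕ) (T : ℕ → Finset ℕ)
    (hout : ∀ i, i ∉ Finset.Icc 1 n → T i = ∅)
    (hTc : ∀ i ∈ Finset.Icc 1 n, (T i).card ≤ C) :
    ∀ (l : List (ℕ × ℕ)), (∀ p ∈ l, p.2 ∈ T p.1 ∧ 1 ≤ p.1 ∧ p.1 ≤ n) →
    ∀ M S, InvGP n C T M S →
    InvGP n C T (l.foldl (fun M p => gpcaStep C T p.1 M p.2) M)
      (grun (capf C T) S (l.flatMap (itemsOf T))) := by
  intro l
  induction l with
  | nil => intro _ M S h; exact h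
  | cons p l ih =>
    intro hl M S hInv
    obtain ⟨hpT, hp1, hpn⟩ := hl p List.mem_cons_self
    rw [List.flatMap_cons, List.foldl_cons]
    have hstep : InvGP n C T (gpcaStep C T p.1 M p.2)
        (grun (capf C T) S (itemsOf T p)) := by
      obtain ⟨e, t⟩ := p
      simp only at hpT hp1 hpn
      cases hprev : prevOcc T t e with
      | none =>
        have h1 : gpcaStep C T e M t = M := by
          rw [gpcaStep, show ((List.range e).filter (fun s => decide (t ∈ T s))).max? = none from hprev]
        have h2 : itemsOf T (e, t) = [] := by rw [itemsOf]; simp only; rw [hprev]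
        rw [h1, h2]
        exact hInv
      | some s =>
        obtain ⟨hts, hse, hgapfree⟩ := prevOcc_spec hprev
        have hs1 : 1 ≤ s := by
          by_contra hc
          have : T s = ∅ := hout s (by simp; omega)
          rw [this] at hts; simp at hts
        set g : Item := (t, s, e) with hgdef
        have hgvalid : ValidI n T g := by
          refine ⟨hts, hpT, hse, hs1, hpn, ?_⟩
          intro i hi
          simp only [Finset.mem_Ioo] at hi
          exact hgapfree i hi.1 hi.2
        have h2 : itemsOf T (e, t) = [g] := by rw [itemsOf]; simp only; rw [hprev]
        have hcondiff : (∀ i ∈ Finset.Ioo s e, (M i).card < C) ↔ Fits (capf C T) S g := by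
          constructor
          · intro hc j hj
            have hj' := hj
            simp only [hgdef, igap, Finset.mem_Ioo] at hj'
            have hTj : (T j).card ≤ C := hTc j (Finset.mem_Icc.2 ⟨by omega, by omega⟩)
            have := hc j (by simpa [hgdef, igap] using hj)
            rw [card_of_inv hInv j] at this
            simp only [capf]
            omega
          · intro hc i hi
            have hi' := hi
            simp only [Finset.mem_Ioo] at hi'
            have := hc i (by simpa [hgdef, igap] using hi)
            simp only [capf] at this
            rw [card_of_inv hInv i]
            omega
        have h1 : gpcaStep C T e M t =
            if ∀ i ∈ Finset.Ioo s e, (M i).card < C then addRange t s e M else M := by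
          rw [gpcaStep, show ((List.range e).filter (fun s => decide (t ∈ T s))).max? = some s from hprev]
        rw [h1, h2]
        show InvGP n C T _ (grun (capf C T) S [g])
        rw [grun, List.foldl_cons, List.foldl_nil]
        by_cases hcond : ∀ i ∈ Finset.Ioo s e, (M i).card < C
        · rw [if_pos hcond, if_pos (hcondiff.1 hcond)]
          constructor
          · intro i
            show addRange t s e M i = _
            rw [addRange]
            by_cases hi : s < i ∧ i < e
            · rw [if_pos hi, hInv.1 i]
              have higap : i ∈ igap g := by simp [hgdef, igap, Finset.mem_Ioo]; omega
              have : toolsAt (insert g S) i = insert t (toolsAt S i) := by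
                rw [toolsAt, Finset.filter_insert, if_pos higap, Finset.image_insert]; rfl
              rw [this, Finset.union_insert]
            · rw [if_neg hi, hInv.1 i]
              have higap : i ∉ igap g := by simp [hgdef, igap, Finset.mem_Ioo]; omega
              have : toolsAt (insert g S) i = toolsAt S i := by
                rw [toolsAt, Finset.filter_insert, if_neg higap]; rfl
              rw [this]
          · intro g' hg'
            rcases Finset.mem_insert.1 hg' with rfl | hg'
            · exact hgvalid
            · exact hInv.2 g' hg'
        · rw [if_neg hcond, if_neg (fun hf => hcond (hcondiff.2 hf))]
          exact hInv
    have hl' : ∀ p ∈ l, p.2 ∈ T p.1 ∧ 1 ≤ p.1 ∧ p.1 ≤ n := fun q hq => hl q (List.mem_cons_of_mem _ hq)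
    have := ih hl' _ _ hstep
    rw [grun, List.foldl_append]
    exact this

lemma gpca_char (n C : ℕ) (T : ℕ → Finset ℕ)
    (hout : ∀ i, i ∉ Finset.Icc 1 n → T i = ∅)
    (hTc : ∀ i ∈ Finset.Icc 1 n, (T i).card ≤ C) :
    InvGP n C T (GPCA C n T) (AccS n C T) := by
  rw [GPCA_eq, AccS, itemList]
  have hbase : InvGP n C T T ∅ := by
    constructor
    · intro i; simp [toolsAt]
    · intro g hg; simp at hg
  have := lockstep n C T hout hTc (rawList n T) (fun p hp => by
    have := mem_rawList.1 hp; exact ⟨this.2.2, this.1, this.2.1⟩) T ∅ hbase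
  exact this

end TLPAux

namespace TLPAux

lemma mem_itemsOf {T : ℕ → Finset ℕ} {p : ℕ × ℕ} {g : Item} :
    g ∈ itemsOf T p ↔ prevOcc T p.2 p.1 = some g.2.1 ∧ g = (p.2, g.2.1, p.1) := by
  rw [itemsOf]
  cases hp : prevOcc T p.2 p.1 with
  | none => simp
  | some s =>
    simp only [List.mem_singleton]
    constructor
    · rintro rfl; exact ⟨rfl, rfl⟩
    · rintro ⟨hs, hg⟩
      rw [Option.some_inj] at hs
      rw [hg, ← hs]

lemma mem_itemList_iff {n : ℕ} {T : ℕ → Finset ℕ} {g : Item} :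
    g ∈ itemList n T ↔ 1 ≤ g.2.2 ∧ g.2.2 ≤ n ∧ g.1 ∈ T g.2.2 ∧ prevOcc T g.1 g.2.2 = some g.2.1 := by
  rw [itemList, List.mem_flatMap]
  constructor
  · rintro ⟨p, hp, hg⟩
    obtain ⟨h1, h2, h3⟩ := mem_rawList.1 hp
    obtain ⟨hprev, hgeq⟩ := mem_itemsOf.1 hg
    rw [hgeq]
    exact ⟨h1, h2, h3, hprev⟩
  · rintro ⟨h1, h2, h3, h4⟩
    refine ⟨(g.2.2, g.1), mem_rawList.2 ⟨h1, h2, h3⟩, mem_itemsOf.2 ⟨h4, rfl⟩⟩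

lemma valid_of_mem_itemList {n : ℕ} {T : ℕ → Finset ℕ}
    (hout : ∀ i, i ∉ Finset.Icc 1 n → T i = ∅) {g : Item} (hg : g ∈ itemList n T) :
    ValidI n T g := by
  obtain ⟨h1, h2, h3, h4⟩ := mem_itemList_iff.1 hg
  obtain ⟨hts, hse, hfree⟩ := prevOcc_spec h4
  have hs1 : 1 ≤ g.2.1 := by
    by_contra hc
    have : T g.2.1 = ∅ := hout _ (by simp; omega)
    rw [this] at hts; simp at hts
  exact ⟨hts, h3, hse, hs1, h2, fun i hi => hfree i (Finset.mem_Ioo.1 hi).1 (Finset.mem_Ioo.1 hi).2⟩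

lemma pairwise_of_all {α : Type*} {R : α → α → Prop} :
    ∀ {l : List α}, (∀ a ∈ l, ∀ b ∈ l, R a b) → l.Pairwise R := by
  intro l
  induction l with
  | nil => intro _; exact List.Pairwise.nil
  | cons a l ih =>
    intro h
    refine List.Pairwise.cons (fun b hb => h a (by simp) b (by simp [hb])) ?_
    exact ih (fun x hx y hy => h x (by simp [hx]) y (by simp [hy]))

lemma itemList_sorted (n : ℕ) (T : ℕ → Finset ℕ) :
    (itemList n T).Pairwise (fun a b => a.2.2 ≤ b.2.2) := by
  have key : ∀ (m : ℕ) (F : ℕ → List Item), (∀ k, ∀ g ∈ F k, g.2.2 = k + 1) →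
      ((List.range m).flatMap F).Pairwise (fun a b => a.2.2 ≤ b.2.2) := by
    intro m
    induction m with
    | zero => intro F _; simp
    | succ m ih =>
      intro F hF
      rw [List.range_succ, List.flatMap_append]
      rw [List.pairwise_append]
      refine ⟨ih F hF, ?_, ?_⟩
      · simp only [List.flatMap_cons, List.flatMap_nil, List.append_nil]
        exact pairwise_of_all (fun a ha b hb => by rw [hF m a ha, hF m b hb])
      · intro a ha b hb
        simp only [List.flatMap_cons, List.flatMap_nil, List.append_nil] at hb
        obtain ⟨k, hk, hak⟩ := List.mem_flatMap.1 ha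
        rw [hF k a hak, hF m b hb]
        rw [List.mem_range] at hk
        omega
  have : itemList n T = (List.range n).flatMap
      (fun e1 => (((T (e1+1)).sort (· ≤ ·)).map (fun t => (e1+1, t))).flatMap (itemsOf T)) := by
    rw [itemList, rawList, List.flatMap_assoc]
  rw [this]
  apply key
  intro k g hg
  obtain ⟨p, hp, hgp⟩ := List.mem_flatMap.1 hg
  obtain ⟨t, _, rfl⟩ := List.mem_map.1 hp
  obtain ⟨_, hgeq⟩ := mem_itemsOf.1 hgp
  rw [hgeq]

def ClosedI (N : ℕ → Finset ℕ) (g : Item) : Prop := ∀ i ∈ igap g, g.1 ∈ N i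

instance (N : ℕ → Finset ℕ) (g : Item) : Decidable (ClosedI N g) := by
  unfold ClosedI; infer_instance

def closedF (n : ℕ) (T : ℕ → Finset ℕ) (N : ℕ → Finset ℕ) : Finset Item :=
  (itemList n T).toFinset.filter (ClosedI N)

def startsF (n t : ℕ) (N : ℕ → Finset ℕ) : Finset ℕ :=
  (Finset.Icc 1 (n-1)).filter (fun i => t ∈ N (i+1) ∧ t ∉ N i)

def unclT (n : ℕ) (T : ℕ → Finset ℕ) (t : ℕ) (N : ℕ → Finset ℕ) : Finset Item :=
  (itemList n T).toFinset.filter (fun g => g.1 = t ∧ ¬ ClosedI N g)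

def occF (n : ℕ) (T : ℕ → Finset ℕ) (t : ℕ) : Finset ℕ :=
  (Finset.Icc 1 n).filter (fun e => t ∈ T e)

lemma occF_nonempty {n : ℕ} {T : ℕ → Finset ℕ} {t : ℕ}
    (ht : t ∈ (Finset.Icc 1 n).biUnion T) : (occF n T t).Nonempty := by
  obtain ⟨e, he, hte⟩ := Finset.mem_biUnion.1 ht
  exact ⟨e, Finset.mem_filter.2 ⟨he, hte⟩⟩

lemma max_getD_spec {s : Finset ℕ} (h : s.Nonempty) :
    s.max.getD 0 ∈ s ∧ ∀ b ∈ s, b ≤ s.max.getD 0 := by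
  obtain ⟨m, hm⟩ := Finset.max_of_nonempty h
  rw [hm]
  exact ⟨Finset.mem_of_max hm, fun b hb => Finset.le_max_of_eq hb hm⟩

/-- Lower bound (L1): for any feasible `M`, each tool's unclosed gaps plus the
initial-load indicator are injectively mapped into switch positions. -/
lemma L1 {n : ℕ} {T : ℕ → Finset ℕ}
    (hout : ∀ i, i ∉ Finset.Icc 1 n → T i = ∅)
    {M : ℕ → Finset ℕ} (hM : ∀ i ∈ Finset.Icc 1 n, T i ⊆ M i)
    {t : ℕ} (ht : t ∈ (Finset.Icc 1 n).biUnion T) :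
    (unclT n T t M).card + (if t ∈ M 1 then 0 else 1) ≤ (startsF n t M).card := by
  classical
  set W : Item → Finset ℕ := fun g => (Finset.Ioo g.2.1 g.2.2).filter (fun i => t ∉ M i) with hW
  set f : Item → ℕ := fun g => (W g).max.getD 0 with hf
  have hprops : ∀ g ∈ unclT n T t M, f g ∈ startsF n t M ∧ f g ∈ igap g := by
    intro g hg
    obtain ⟨hgitem, hgt, hgnc⟩ := Finset.mem_filter.1 hg
    have hgval : ValidI n T g := valid_of_mem_itemList hout (List.mem_toFinset.1 hgitem)
    obtain ⟨hv1, hv2, hv3, hv4, hv5, hv6⟩ := hgval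
    have hWne : (W g).Nonempty := by
      rw [ClosedI] at hgnc
      push_neg at hgnc
      obtain ⟨i, hi, hti⟩ := hgnc
      exact ⟨i, Finset.mem_filter.2 ⟨hi, hgt ▸ hti⟩⟩
    obtain ⟨hmem, hmax⟩ := max_getD_spec hWne
    have hfeq : f g = (W g).max.getD 0 := rfl
    rw [← hfeq] at hmem
    replace hmax : ∀ b ∈ W g, b ≤ f g := by rw [hfeq]; exact hmax
    obtain ⟨hmIoo, hmnotM⟩ := Finset.mem_filter.1 hmem
    rw [Finset.mem_Ioo] at hmIoo
    have hnext : t ∈ M (f g + 1) := by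
      by_cases he : f g + 1 = g.2.2
      · rw [he]
        exact hgt ▸ hM g.2.2 (Finset.mem_Icc.2 ⟨by omega, hv5⟩) hv2
      · by_contra hc
        have : f g + 1 ∈ W g := Finset.mem_filter.2 ⟨Finset.mem_Ioo.2 ⟨by omega, by omega⟩, hc⟩
        have := hmax _ this
        omega
    refine ⟨Finset.mem_filter.2 ⟨Finset.mem_Icc.2 ⟨by omega, by omega⟩, hnext, hmnotM⟩, ?_⟩
    exact Finset.mem_Ioo.2 hmIoo
  have hinj : Set.InjOn f (unclT n T t M) := by
    intro g hg h hh hfeq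
    have hg' := hprops g hg
    have hh' := hprops h hh
    have hgt := (Finset.mem_filter.1 hg).2.1
    have hht := (Finset.mem_filter.1 hh).2.1
    refine valid_unique (valid_of_mem_itemList hout (List.mem_toFinset.1 (Finset.mem_filter.1 hg).1))
      (valid_of_mem_itemList hout (List.mem_toFinset.1 (Finset.mem_filter.1 hh).1))
      (by rw [hgt, hht]) hg'.2 (hfeq ▸ hh'.2)
  have hcard : ((unclT n T t M).image f).card = (unclT n T t M).card :=
    Finset.card_image_of_injOn hinj
  have hsub : (unclT n T t M).image f ⊆ startsF n t M := by
    intro x hx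
    obtain ⟨g, hg, rfl⟩ := Finset.mem_image.1 hx
    exact (hprops g hg).1
  by_cases htM1 : t ∈ M 1
  · rw [if_pos htM1]
    simpa [hcard] using Finset.card_le_card hsub
  · rw [if_neg htM1]
    -- the extra start before the first occurrence
    have hoccne := occF_nonempty ht
    set o1 := (occF n T t).min' hoccne with ho1
    have ho1mem := Finset.min'_mem (occF n T t) hoccne
    obtain ⟨ho1Icc, hto1⟩ := Finset.mem_filter.1 ho1mem
    rw [Finset.mem_Icc] at ho1Icc
    have ho1ge2 : 2 ≤ o1 := by
      by_contra hc
      have h1 : o1 = 1 := by omega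
      exact htM1 (hM 1 (Finset.mem_Icc.2 ⟨le_refl 1, ho1Icc.2.trans' (by omega)⟩) (h1 ▸ hto1))
    set W0 : Finset ℕ := (Finset.Ico 1 o1).filter (fun i => t ∉ M i) with hW0
    have hW0ne : W0.Nonempty := ⟨1, Finset.mem_filter.2 ⟨Finset.mem_Ico.2 ⟨le_refl 1, by omega⟩, htM1⟩⟩
    set x0 := W0.max.getD 0 with hx0
    obtain ⟨hx0mem, hx0max⟩ := max_getD_spec hW0ne
    rw [← hx0] at hx0mem
    replace hx0max : ∀ b ∈ W0, b ≤ x0 := by rw [hx0]; exact hx0max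
    obtain ⟨hx0Ico, hx0notM⟩ := Finset.mem_filter.1 hx0mem
    rw [Finset.mem_Ico] at hx0Ico
    have hx0next : t ∈ M (x0 + 1) := by
      by_cases he : x0 + 1 = o1
      · rw [he]; exact hM o1 (Finset.mem_Icc.2 ⟨by omega, ho1Icc.2⟩) hto1
      · by_contra hc
        have : x0 + 1 ∈ W0 := Finset.mem_filter.2 ⟨Finset.mem_Ico.2 ⟨by omega, by omega⟩, hc⟩
        have := hx0max _ this
        omega
    have hx0starts : x0 ∈ startsF n t M :=
      Finset.mem_filter.2 ⟨Finset.mem_Icc.2 ⟨hx0Ico.1, by omega⟩, hx0next, hx0notM⟩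
    have hx0notim : x0 ∉ (unclT n T t M).image f := by
      intro hc
      obtain ⟨g, hg, hgeq⟩ := Finset.mem_image.1 hc
      have hgval := valid_of_mem_itemList hout (List.mem_toFinset.1 (Finset.mem_filter.1 hg).1)
      have hgt := (Finset.mem_filter.1 hg).2.1
      have hs_occ : g.2.1 ∈ occF n T t := by
        refine Finset.mem_filter.2 ⟨Finset.mem_Icc.2 ⟨hgval.2.2.2.1, ?_⟩, hgt ▸ hgval.1⟩
        have h1 := hgval.2.2.1
        have h2 := hgval.2.2.2.2.1
        omega
      have : o1 ≤ g.2.1 := Finset.min'_le _ _ hs_occ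
      have := (Finset.mem_Ioo.1 (hprops g hg).2).1
      omega
    have : insert x0 ((unclT n T t M).image f) ⊆ startsF n t M :=
      Finset.insert_subset hx0starts hsub
    have := Finset.card_le_card this
    rw [Finset.card_insert_of_notMem hx0notim, hcard] at this
    omega

/-- (L2): upper bound on starts of the GPCA output `G`. -/
lemma L2 {n C : ℕ} {T : ℕ → Finset ℕ}
    (hout : ∀ i, i ∉ Finset.Icc 1 n → T i = ∅)
    (hTc : ∀ i ∈ Finset.Icc 1 n, (T i).card ≤ C)
    {t : ℕ} (ht : t ∈ (Finset.Icc 1 n).biUnion T) :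
    (startsF n t (GPCA C n T)).card + (if t ∈ T 1 then 1 else 0) ≤
      (unclT n T t (GPCA C n T)).card + 1 := by
  classical
  obtain ⟨hGeq, hGval⟩ := gpca_char n C T hout hTc
  set G := GPCA C n T with hGdef
  have hoccne := occF_nonempty ht
  set o1 := (occF n T t).min' hoccne with ho1
  have ho1mem := Finset.min'_mem (occF n T t) hoccne
  obtain ⟨ho1Icc, hto1⟩ := Finset.mem_filter.1 ho1mem
  rw [Finset.mem_Icc] at ho1Icc
  have hsub : startsF n t G ⊆ insert (o1 - 1) ((unclT n T t G).image (fun g => g.2.2 - 1)) := by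
    intro i hi
    obtain ⟨hiIcc, htGi1, htGi⟩ := Finset.mem_filter.1 hi
    rw [Finset.mem_Icc] at hiIcc
    -- step a : t ∈ T (i+1)
    have htTi1 : t ∈ T (i+1) := by
      rw [hGeq (i+1)] at htGi1
      rcases Finset.mem_union.1 htGi1 with h | h
      · exact h
      · exfalso
        obtain ⟨g, hgAcc, hgt, hgi⟩ := mem_toolsAt.1 h
        simp only [igap, Finset.mem_Ioo] at hgi
        apply htGi
        rw [hGeq i]
        by_cases hcase : i = g.2.1
        · exact Finset.mem_union_left _ (by rw [hcase, ← hgt]; exact (hGval g hgAcc).1)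
        · have : i ∈ igap g := Finset.mem_Ioo.2 ⟨by omega, by omega⟩
          exact Finset.mem_union_right _ (mem_toolsAt.2 ⟨g, hgAcc, hgt, this⟩)
    have hi1occ : i + 1 ∈ occF n T t :=
      Finset.mem_filter.2 ⟨Finset.mem_Icc.2 ⟨by omega, by omega⟩, htTi1⟩
    by_cases hfirst : i + 1 = o1
    · exact Finset.mem_insert.2 (Or.inl (by omega))
    · have ho1lt : o1 < i + 1 := by
        have := Finset.min'_le _ _ hi1occ
        omega
      obtain ⟨s, hs⟩ := prevOcc_isSome (show o1 < i + 1 from ho1lt) hto1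
      set g : Item := (t, s, i+1) with hgdef
      have hg1 : g.1 = t := rfl
      have hg21 : g.2.1 = s := rfl
      have hg22 : g.2.2 = i + 1 := rfl
      have hgitem : g ∈ itemList n T := mem_itemList_iff.2 ⟨by omega, by omega,
        by rw [hg1, hg22]; exact htTi1, by rw [hg1, hg22, hg21]; exact hs⟩
      obtain ⟨hts, hsi1, hfree⟩ := prevOcc_spec hs
      have hsi : s < i := by
        rcases Nat.lt_or_ge s i with h | h
        · exact h
        · exfalso
          have hsieq : s = i := by omega
          apply htGi
          rw [hGeq i]
          exact Finset.mem_union_left _ (hsieq ▸ hts)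
      have hiigap : i ∈ igap g := Finset.mem_Ioo.2 ⟨by omega, by omega⟩
      have hgnc : ¬ ClosedI G g := by
        intro hc
        exact htGi (hc i hiigap)
      refine Finset.mem_insert.2 (Or.inr (Finset.mem_image.2 ⟨g, ?_, by simp [hgdef]⟩))
      exact Finset.mem_filter.2 ⟨List.mem_toFinset.2 hgitem, rfl, hgnc⟩
  by_cases htT1 : t ∈ T 1
  · rw [if_pos htT1]
    have ho1eq : o1 = 1 := by
      have : (1:ℕ) ∈ occF n T t := by
        refine Finset.mem_filter.2 ⟨Finset.mem_Icc.2 ⟨le_refl 1, ?_⟩, htT1⟩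
        · exact ho1Icc.2.trans' (by omega)
      have := Finset.min'_le _ _ this
      omega
    have h0 : (0:ℕ) ∉ startsF n t G := by
      intro hc
      have := (Finset.mem_Icc.1 (Finset.mem_filter.1 hc).1).1
      omega
    have : startsF n t G ⊆ (unclT n T t G).image (fun g => g.2.2 - 1) := by
      intro x hx
      rcases Finset.mem_insert.1 (hsub hx) with h | h
      · exfalso; rw [ho1eq] at h; simp at h; exact h0 (h ▸ hx)
      · exact h
    have := Finset.card_le_card this
    have him := Finset.card_image_le (s := unclT n T t G) (f := fun g => g.2.2 - 1)
    omega
  · rw [if_neg htT1]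
    have := Finset.card_le_card hsub
    have h1 := Finset.card_insert_le (o1 - 1) ((unclT n T t G).image (fun g => g.2.2 - 1))
    have him := Finset.card_image_le (s := unclT n T t G) (f := fun g => g.2.2 - 1)
    omega

/-- Acc is exactly the set of items closed in G. -/
lemma acc_eq_closedF {n C : ℕ} {T : ℕ → Finset ℕ}
    (hout : ∀ i, i ∉ Finset.Icc 1 n → T i = ∅)
    (hTc : ∀ i ∈ Finset.Icc 1 n, (T i).card ≤ C) :
    AccS n C T = closedF n T (GPCA C n T) := by
  classical
  obtain ⟨hGeq, hGval⟩ := gpca_char n C T hout hTc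
  have haccsub : AccS n C T ⊆ (itemList n T).toFinset := by
    have := grun_subset (capf C T) ∅ (itemList n T)
    rwa [Finset.empty_union] at this
  ext g
  simp only [closedF, Finset.mem_filter]
  constructor
  · intro hg
    refine ⟨haccsub hg, ?_⟩
    intro i hi
    rw [hGeq i]
    exact Finset.mem_union_right _ (mem_toolsAt.2 ⟨g, hg, rfl, hi⟩)
  · rintro ⟨hgitem, hgclosed⟩
    by_contra hgnacc
    have hgval : ValidI n T g := valid_of_mem_itemList hout (List.mem_toFinset.1 hgitem)
    by_cases hempty : igap g = ∅
    · exact hgnacc (mem_grun_of_empty hempty _ _ (List.mem_toFinset.1 hgitem))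
    · obtain ⟨i, hi⟩ := Finset.nonempty_iff_ne_empty.2 hempty
      have htGi := hgclosed i hi
      rw [hGeq i] at htGi
      rcases Finset.mem_union.1 htGi with h | h
      · exact hgval.2.2.2.2.2 i hi h
      · obtain ⟨h', hh'Acc, hh't, hh'i⟩ := mem_toolsAt.1 h
        have : g = h' := valid_unique hgval (hGval h' hh'Acc) hh't.symm hi hh'i
        exact hgnacc (this ▸ hh'Acc)

end TLPAux

namespace TLPAux

lemma closedF_feas {n C : ℕ} {T : ℕ → Finset ℕ}
    (hout : ∀ i, i ∉ Finset.Icc 1 n → T i = ∅)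
    {M : ℕ → Finset ℕ} (hM : ∀ i ∈ Finset.Icc 1 n, T i ⊆ M i ∧ (M i).card = C) :
    Feas (capf C T) (closedF n T M) := by
  classical
  intro j
  rcases Finset.eq_empty_or_nonempty ((closedF n T M).filter (fun g => j ∈ igap g)) with he | hne
  · show ((closedF n T M).filter (fun g => j ∈ igap g)).card ≤ _
    rw [he]; simp
  · obtain ⟨g0, hg0⟩ := hne
    obtain ⟨hg0c, hg0j⟩ := Finset.mem_filter.1 hg0
    have hg0val := valid_of_mem_itemList hout (List.mem_toFinset.1 (Finset.mem_filter.1 hg0c).1)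
    have hjIcc : j ∈ Finset.Icc 1 n := by
      simp only [igap, Finset.mem_Ioo] at hg0j
      have h1 := hg0val.2.2.2.1
      have h2 := hg0val.2.2.2.2.1
      exact Finset.mem_Icc.2 ⟨by omega, by omega⟩
    obtain ⟨hTM, hcard⟩ := hM j hjIcc
    have hinj : ((closedF n T M).filter (fun g => j ∈ igap g)).card ≤ (M j \ T j).card := by
      apply Finset.card_le_card_of_injOn (fun g => g.1)
      · intro g hg
        obtain ⟨hgc, hgj⟩ := Finset.mem_filter.1 hg
        obtain ⟨hgitem, hgclosed⟩ := Finset.mem_filter.1 hgc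
        have hgval := valid_of_mem_itemList hout (List.mem_toFinset.1 hgitem)
        exact Finset.mem_sdiff.2 ⟨hgclosed j hgj, hgval.2.2.2.2.2 j hgj⟩
      · intro g hg h hh heq
        obtain ⟨hgc, hgj⟩ := Finset.mem_filter.1 hg
        obtain ⟨hhc, hhj⟩ := Finset.mem_filter.1 hh
        exact valid_unique
          (valid_of_mem_itemList hout (List.mem_toFinset.1 (Finset.mem_filter.1 hgc).1))
          (valid_of_mem_itemList hout (List.mem_toFinset.1 (Finset.mem_filter.1 hhc).1))
          heq hgj hhj
    have hsd : (M j \ T j).card = C - (T j).card := by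
      rw [Finset.card_sdiff_of_subset hTM, hcard]
    show ((closedF n T M).filter (fun g => j ∈ igap g)).card ≤ capf C T j
    rw [capf, ← hsd]
    exact hinj

lemma closed_card_le_acc {n C : ℕ} {T : ℕ → Finset ℕ}
    (hout : ∀ i, i ∉ Finset.Icc 1 n → T i = ∅)
    {M : ℕ → Finset ℕ} (hM : ∀ i ∈ Finset.Icc 1 n, T i ⊆ M i ∧ (M i).card = C) :
    (closedF n T M).card ≤ (AccS n C T).card := by
  have := grun_opt (capf C T) (itemList n T) (itemList_sorted n T) ∅ (closedF n T M)
    (closedF_feas hout hM) (Finset.empty_subset _)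
    (by rw [Finset.sdiff_empty]; exact Finset.filter_subset _ _)
  exact this

lemma tool_mem_pool {n : ℕ} {T : ℕ → Finset ℕ}
    (hout : ∀ i, i ∉ Finset.Icc 1 n → T i = ∅) {g : Item}
    (hg : g ∈ (itemList n T).toFinset) : g.1 ∈ (Finset.Icc 1 n).biUnion T := by
  have hval := valid_of_mem_itemList hout (List.mem_toFinset.1 hg)
  exact Finset.mem_biUnion.2 ⟨g.2.2, Finset.mem_Icc.2 ⟨by have := hval.2.2.1; have := hval.2.2.2.1; omega, hval.2.2.2.2.1⟩, hval.2.1⟩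

lemma fiber_count {n : ℕ} {T : ℕ → Finset ℕ}
    (hout : ∀ i, i ∉ Finset.Icc 1 n → T i = ∅)
    {X : Finset Item} (hX : X ⊆ (itemList n T).toFinset) :
    X.card = ∑ t ∈ (Finset.Icc 1 n).biUnion T, (X.filter (fun g => g.1 = t)).card :=
  Finset.card_eq_sum_card_fiberwise (fun g hg => tool_mem_pool hout (hX hg))

lemma sum_unclT {n : ℕ} {T : ℕ → Finset ℕ}
    (hout : ∀ i, i ∉ Finset.Icc 1 n → T i = ∅) (N : ℕ → Finset ℕ) :
    (∑ t ∈ (Finset.Icc 1 n).biUnion T, (unclT n T t N).card) + (closedF n T N).card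
      = (itemList n T).toFinset.card := by
  classical
  have h1 : (closedF n T N).card
      = ∑ t ∈ (Finset.Icc 1 n).biUnion T, ((closedF n T N).filter (fun g => g.1 = t)).card :=
    fiber_count hout (Finset.filter_subset _ _)
  have h2 := fiber_count hout (X := (itemList n T).toFinset) (Finset.Subset.refl _)
  rw [h1, ← Finset.sum_add_distrib, h2]
  apply Finset.sum_congr rfl
  intro t _
  have : unclT n T t N = ((itemList n T).toFinset.filter (fun g => g.1 = t)).filter
      (fun g => ¬ ClosedI N g) := by
    rw [unclT, Finset.filter_filter]
  rw [this]
  have : (closedF n T N).filter (fun g => g.1 = t)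
      = ((itemList n T).toFinset.filter (fun g => g.1 = t)).filter (fun g => ClosedI N g) := by
    rw [closedF, Finset.filter_filter, Finset.filter_filter]
    apply Finset.filter_congr
    intro g _
    simp [and_comm]
  rw [this, add_comm]
  exact Finset.card_filter_add_card_filter_not _

lemma switches_eq_sum {n : ℕ} {T : ℕ → Finset ℕ} {N : ℕ → Finset ℕ}
    (hN : ∀ i ∈ Finset.Icc 1 n, N i ⊆ (Finset.Icc 1 n).biUnion T) :
    switches n N = ∑ t ∈ (Finset.Icc 1 n).biUnion T, (startsF n t N).card := by
  classical
  rw [switches]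
  have key : ∀ i ∈ Finset.Icc 1 (n-1),
      (N (i+1) \ N i).card
        = ∑ t ∈ (Finset.Icc 1 n).biUnion T, (if t ∈ N (i+1) ∧ t ∉ N i then 1 else 0) := by
    intro i hi
    rw [Finset.mem_Icc] at hi
    have hsub : N (i+1) ⊆ (Finset.Icc 1 n).biUnion T :=
      hN (i+1) (Finset.mem_Icc.2 ⟨by omega, by omega⟩)
    have : N (i+1) \ N i
        = ((Finset.Icc 1 n).biUnion T).filter (fun t => t ∈ N (i+1) ∧ t ∉ N i) := by
      ext x
      rw [Finset.mem_sdiff, Finset.mem_filter]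
      constructor
      · intro ⟨h1, h2⟩; exact ⟨hsub h1, h1, h2⟩
      · intro ⟨_, h1, h2⟩; exact ⟨h1, h2⟩
    rw [this, Finset.card_filter]
  rw [Finset.sum_congr rfl key, Finset.sum_comm]
  apply Finset.sum_congr rfl
  intro t _
  rw [startsF, Finset.card_filter]

lemma sum_indicator_one {n : ℕ} {T : ℕ → Finset ℕ} {N : ℕ → Finset ℕ}
    (h1 : N 1 ⊆ (Finset.Icc 1 n).biUnion T) :
    (∑ t ∈ (Finset.Icc 1 n).biUnion T, if t ∈ N 1 then 1 else 0) = (N 1).card := by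
  classical
  rw [← Finset.card_filter]
  congr 1
  ext a
  rw [Finset.mem_filter]
  exact ⟨fun h => h.2, fun h => ⟨h1 h, h⟩⟩

end TLPAux

namespace TLPAux

lemma subset_fillFrom (C : ℕ) (src dst : Finset ℕ) : dst ⊆ fillFrom C src dst :=
  Finset.subset_union_left

lemma fillFrom_subset (C : ℕ) (src dst : Finset ℕ) : fillFrom C src dst ⊆ src ∪ dst := by
  rw [fillFrom]
  apply Finset.union_subset Finset.subset_union_right
  intro x hx
  rw [List.mem_toFinset] at hx
  have := List.take_subset _ _ hx
  rw [Finset.mem_sort] at this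
  exact Finset.mem_union_left _ (Finset.mem_sdiff.1 this).1

lemma card_fillFrom_le {C : ℕ} {dst : Finset ℕ} (src : Finset ℕ) (h : dst.card ≤ C) :
    (fillFrom C src dst).card ≤ C := by
  rw [fillFrom]
  calc (dst ∪ _).card ≤ dst.card + _ := Finset.card_union_le _ _
    _ ≤ C := by
      have h1 := List.toFinset_card_le ((((src \ dst).sort (· ≤ ·))).take (C - dst.card))
      have h2 : (((src \ dst).sort (· ≤ ·)).take (C - dst.card)).length ≤ C - dst.card := by
        rw [List.length_take]; omega
      omega

lemma fill_invariant {C : ℕ} {src dst : Finset ℕ} (h : dst.card ≤ C) :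
    C ≤ (fillFrom C src dst).card ∨ src ∪ dst ⊆ fillFrom C src dst := by
  classical
  set l := (src \ dst).sort (· ≤ ·) with hl
  by_cases hlen : C - dst.card ≤ l.length
  · left
    rw [fillFrom, ← hl]
    have hnd : (l.take (C - dst.card)).Nodup :=
      (List.take_sublist _ _).nodup (Finset.sort_nodup _ _)
    have hcardt : (l.take (C - dst.card)).toFinset.card = C - dst.card := by
      rw [List.toFinset_card_of_nodup hnd, List.length_take]
      omega
    have hdisj : Disjoint dst (l.take (C - dst.card)).toFinset := by
      rw [Finset.disjoint_right]
      intro x hx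
      rw [List.mem_toFinset] at hx
      have := List.take_subset _ _ hx
      rw [hl, Finset.mem_sort] at this
      exact (Finset.mem_sdiff.1 this).2
    rw [Finset.card_union_of_disjoint hdisj, hcardt]
    omega
  · right
    push_neg at hlen
    have htake : l.take (C - dst.card) = l := List.take_of_length_le (by omega)
    rw [fillFrom, ← hl, htake]
    have : l.toFinset = src \ dst := Finset.sort_toFinset _ _
    rw [this]
    intro x hx
    rcases Finset.mem_union.1 hx with hx | hx
    · by_cases hd : x ∈ dst
      · exact Finset.mem_union_left _ hd
      · exact Finset.mem_union_right _ (Finset.mem_sdiff.2 ⟨hx, hd⟩)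
    · exact Finset.mem_union_left _ hx

end TLPAux

namespace TLPAux

lemma fill_reaches {C : ℕ} {src dst : Finset ℕ} (h : dst.card ≤ C)
    (h2 : C ≤ (src ∪ dst).card) : C ≤ (fillFrom C src dst).card := by
  rcases fill_invariant (src := src) h with hc | hs
  · exact hc
  · exact h2.trans (Finset.card_le_card hs)

lemma passPairs_cons (C : ℕ) (p : ℕ × ℕ) (pairs : List (ℕ × ℕ)) (L : ℕ → Finset ℕ) :
    passPairs C (p :: pairs) L
      = passPairs C pairs (Function.update L p.2 (fillFrom C (L p.1) (L p.2))) := rfl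

lemma passPairs_append (C : ℕ) (l1 l2 : List (ℕ × ℕ)) (L : ℕ → Finset ℕ) :
    passPairs C (l1 ++ l2) L = passPairs C l2 (passPairs C l1 L) := by
  rw [passPairs, passPairs, passPairs, List.foldl_append]

lemma update_mono {L : ℕ → Finset ℕ} {p : ℕ × ℕ} (i : ℕ) :
    L i ⊆ Function.update L p.2 (fillFrom C (L p.1) (L p.2)) i := by
  rcases eq_or_ne i p.2 with rfl | hne
  · rw [Function.update_self]; exact subset_fillFrom _ _ _
  · rw [Function.update_of_ne hne]

lemma passPairs_mono (C : ℕ) : ∀ (pairs : List (ℕ × ℕ)) (L : ℕ → Finset ℕ) (i : ℕ),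
    L i ⊆ passPairs C pairs L i := by
  intro pairs
  induction pairs with
  | nil => intro L i; exact Finset.Subset.refl _
  | cons p pairs ih =>
    intro L i
    rw [passPairs_cons]
    exact (update_mono i).trans (ih _ i)

lemma passPairs_pool (C : ℕ) {P : Finset ℕ} :
    ∀ (pairs : List (ℕ × ℕ)) (L : ℕ → Finset ℕ), (∀ i, L i ⊆ P) →
    ∀ i, passPairs C pairs L i ⊆ P := by
  intro pairs
  induction pairs with
  | nil => intro L hL i; exact hL i
  | cons p pairs ih =>
    intro L hL i
    rw [passPairs_cons]
    apply ih
    intro j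
    rcases eq_or_ne j p.2 with rfl | hne
    · rw [Function.update_self]
      exact (fillFrom_subset _ _ _).trans (Finset.union_subset (hL p.1) (hL p.2))
    · rw [Function.update_of_ne hne]; exact hL j

lemma passPairs_card_le (C : ℕ) :
    ∀ (pairs : List (ℕ × ℕ)) (L : ℕ → Finset ℕ), (∀ i, (L i).card ≤ C) →
    ∀ i, (passPairs C pairs L i).card ≤ C := by
  intro pairs
  induction pairs with
  | nil => intro L hL i; exact hL i
  | cons p pairs ih =>
    intro L hL i
    rw [passPairs_cons]
    apply ih
    intro j
    rcases eq_or_ne j p.2 with rfl | hne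
    · rw [Function.update_self]
      exact card_fillFrom_le _ (hL p.2)
    · rw [Function.update_of_ne hne]; exact hL j

def psiF (n t : ℕ) (N : ℕ → Finset ℕ) : ℕ :=
  (startsF n t N).card + (if t ∈ N 1 then 1 else 0)

lemma psi_update {n t : ℕ} (N : ℕ → Finset ℕ) (a b : ℕ)
    (hab : (b = a + 1 ∧ 2 ≤ b) ∨ (a = b + 1 ∧ 1 ≤ b ∧ b ≤ n - 1))
    {D : Finset ℕ} (hD1 : N b ⊆ D) (hD2 : D ⊆ N a ∪ N b) :
    psiF n t (Function.update N b D) ≤ psiF n t N := by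
  classical
  set N' := Function.update N b D with hN'
  have hval : ∀ x, N' x = if x = b then D else N x := by
    intro x; rw [hN', Function.update_apply]
  by_cases hcase : t ∈ D ∧ t ∉ N b
  · obtain ⟨htD, htNb⟩ := hcase
    have htNa : t ∈ N a := by
      rcases Finset.mem_union.1 (hD2 htD) with h | h
      · exact h
      · exact absurd h htNb
    have hmemN' : ∀ x, x ≠ b → (t ∈ N' x ↔ t ∈ N x) := by
      intro x hx; rw [hval, if_neg hx]
    have hab_ne : a ≠ b := by omega
    rcases hab with ⟨hb, hb2⟩ | ⟨ha, hb1, hbn⟩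
    · -- forward : b = a + 1, 2 ≤ b
      have hsub : startsF n t N' ⊆ startsF n t N := by
        intro i hi
        obtain ⟨hIcc, h1, h2⟩ := Finset.mem_filter.1 hi
        have hia : i ≠ a := by
          intro h
          rw [h, (hmemN' a hab_ne)] at h2
          exact h2 htNa
        have hib : i ≠ b := by
          intro h
          rw [h, hval, if_pos rfl] at h2
          exact h2 htD
        have hi1b : i + 1 ≠ b := by omega
        rw [hmemN' _ hi1b] at h1
        rw [hmemN' _ hib] at h2
        exact Finset.mem_filter.2 ⟨hIcc, h1, h2⟩
      have hind : N' 1 = N 1 := by rw [hval, if_neg (by omega)]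
      rw [psiF, psiF, hind]
      have := Finset.card_le_card hsub
      omega
    · -- backward : a = b + 1
      have hbstart : b ∈ startsF n t N := by
        refine Finset.mem_filter.2 ⟨Finset.mem_Icc.2 ⟨hb1, hbn⟩, ?_, htNb⟩
        rw [← ha]; exact htNa
      have hsub : startsF n t N' ⊆ insert (b-1) ((startsF n t N).erase b) := by
        intro i hi
        obtain ⟨hIcc, h1, h2⟩ := Finset.mem_filter.1 hi
        have hib : i ≠ b := by
          intro h
          rw [h, hval, if_pos rfl] at h2
          exact h2 htD
        rcases eq_or_ne i (b-1) with rfl | hib1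
        · exact Finset.mem_insert_self _ _
        · have hi1b : i + 1 ≠ b := by
            rw [Finset.mem_Icc] at hIcc
            omega
          rw [hmemN' _ hi1b] at h1
          rw [hmemN' _ hib] at h2
          exact Finset.mem_insert_of_mem
            (Finset.mem_erase.2 ⟨hib, Finset.mem_filter.2 ⟨hIcc, h1, h2⟩⟩)
      have hcard : (startsF n t N').card ≤ (startsF n t N).card - 1 + 1 := by
        calc (startsF n t N').card ≤ _ := Finset.card_le_card hsub
          _ ≤ ((startsF n t N).erase b).card + 1 := Finset.card_insert_le _ _
          _ = (startsF n t N).card - 1 + 1 := by rw [Finset.card_erase_of_mem hbstart]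
      have hpos : 1 ≤ (startsF n t N).card := Finset.card_pos.2 ⟨b, hbstart⟩
      rcases eq_or_ne b 1 with rfl | hb1'
      · -- b = 1 : indicator may increase but a start at 1 disappears
        have h0 : (0:ℕ) ∉ startsF n t N' := by
          intro hc
          have := (Finset.mem_Icc.1 (Finset.mem_filter.1 hc).1).1
          omega
        have hsub' : startsF n t N' ⊆ (startsF n t N).erase 1 := by
          intro i hi
          rcases Finset.mem_insert.1 (hsub hi) with h | h
          · exfalso; rw [h] at hi; exact h0 (by simpa using hi)
          · exact h
        have := Finset.card_le_card hsub'
        rw [Finset.card_erase_of_mem hbstart] at this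
        rw [psiF, psiF]
        have hi1 : (if t ∈ N' 1 then 1 else 0) ≤ 1 := by split <;> omega
        have hi2 : (0:ℕ) ≤ (if t ∈ N 1 then 1 else 0) := by omega
        omega
      · have hind : N' 1 = N 1 := by rw [hval, if_neg (Ne.symm hb1')]
        rw [psiF, psiF, hind]
        omega
  · -- memberships of t unchanged
    have hmem : ∀ x, t ∈ N' x ↔ t ∈ N x := by
      intro x
      rw [hval]
      split <;> rename_i h
      · subst h
        constructor
        · intro htD
          by_contra hc
          exact hcase ⟨htD, hc⟩
        · intro h; exact hD1 h
      · rfl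
    have hst : startsF n t N' = startsF n t N := by
      apply Finset.filter_congr
      intro i _
      rw [hmem, hmem]
    rw [psiF, psiF, hst]
    have : (if t ∈ N' 1 then 1 else 0) = (if t ∈ N 1 then 1 else 0) := by
      rcases (hmem 1) with ⟨h1, h2⟩
      by_cases h : t ∈ N 1
      · rw [if_pos h, if_pos (h2 h)]
      · rw [if_neg h, if_neg (fun hc => h (h1 hc))]
    omega

lemma psi_pass {n t C : ℕ} :
    ∀ (pairs : List (ℕ × ℕ)),
    (∀ p ∈ pairs, (p.2 = p.1 + 1 ∧ 2 ≤ p.2) ∨ (p.1 = p.2 + 1 ∧ 1 ≤ p.2 ∧ p.2 ≤ n - 1)) →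
    ∀ (L : ℕ → Finset ℕ), psiF n t (passPairs C pairs L) ≤ psiF n t L := by
  intro pairs
  induction pairs with
  | nil => intro _ L; exact le_refl _
  | cons p pairs ih =>
    intro hp L
    rw [passPairs_cons]
    calc psiF n t (passPairs C pairs _) ≤ _ :=
        ih (fun q hq => hp q (List.mem_cons_of_mem _ hq)) _
      _ ≤ psiF n t L :=
        psi_update L p.1 p.2 (hp p List.mem_cons_self)
          (subset_fillFrom _ _ _) (fillFrom_subset _ _ _)

lemma fwd_pairs_cond (n : ℕ) : ∀ p ∈ fwdPairs n,
    (p.2 = p.1 + 1 ∧ 2 ≤ p.2) ∨ (p.1 = p.2 + 1 ∧ 1 ≤ p.2 ∧ p.2 ≤ n - 1) := by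
  intro p hp
  obtain ⟨i, hi, rfl⟩ := List.mem_map.1 hp
  left; exact ⟨rfl, by omega⟩

lemma bwd_pairs_cond (n : ℕ) : ∀ p ∈ bwdPairs n,
    (p.2 = p.1 + 1 ∧ 2 ≤ p.2) ∨ (p.1 = p.2 + 1 ∧ 1 ≤ p.2 ∧ p.2 ≤ n - 1) := by
  intro p hp
  obtain ⟨i, hi, rfl⟩ := List.mem_map.1 hp
  rw [List.mem_range] at hi
  right
  refine ⟨by omega, by omega, by omega⟩

lemma psi_toFullMag {n C t : ℕ} (L : ℕ → Finset ℕ) :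
    psiF n t (toFullMag C n L) ≤ psiF n t L := by
  rw [toFullMag]
  calc psiF n t _ ≤ psiF n t (passPairs C (fwdPairs n) L) :=
      psi_pass (bwdPairs n) (bwd_pairs_cond n) _
    _ ≤ psiF n t L := psi_pass (fwdPairs n) (fwd_pairs_cond n) _

end TLPAux

namespace TLPAux

lemma acc_feas (n C : ℕ) (T : ℕ → Finset ℕ) : Feas (capf C T) (AccS n C T) := by
  apply grun_feas
  intro j
  show (Finset.filter _ ∅).card ≤ _
  simp

lemma G_one {n C : ℕ} {T : ℕ → Finset ℕ}
    (hout : ∀ i, i ∉ Finset.Icc 1 n → T i = ∅)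
    (hTc : ∀ i ∈ Finset.Icc 1 n, (T i).card ≤ C) :
    GPCA C n T 1 = T 1 := by
  obtain ⟨hGeq, hGval⟩ := gpca_char n C T hout hTc
  rw [hGeq 1]
  have : toolsAt (AccS n C T) 1 = ∅ := by
    rw [Finset.eq_empty_iff_forall_notMem]
    intro t ht
    obtain ⟨g, hgAcc, _, hgi⟩ := mem_toolsAt.1 ht
    have hval := hGval g hgAcc
    have h1 := hval.2.2.2.1
    simp only [igap, Finset.mem_Ioo] at hgi
    omega
  rw [this, Finset.union_empty]

lemma G_card_le {n C : ℕ} {T : ℕ → Finset ℕ}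
    (hout : ∀ i, i ∉ Finset.Icc 1 n → T i = ∅)
    (hTc : ∀ i ∈ Finset.Icc 1 n, (T i).card ≤ C) :
    ∀ i, (GPCA C n T i).card ≤ C := by
  intro i
  have hinv := gpca_char n C T hout hTc
  by_cases hi : i ∈ Finset.Icc 1 n
  · rw [card_of_inv hinv i]
    have h1 := acc_feas n C T i
    have h2 := hTc i hi
    rw [capf] at h1
    omega
  · rw [hinv.1 i, hout i hi]
    have : toolsAt (AccS n C T) i = ∅ := by
      rw [Finset.eq_empty_iff_forall_notMem]
      intro t ht
      obtain ⟨g, hgAcc, _, hgi⟩ := mem_toolsAt.1 ht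
      have hval := hinv.2 g hgAcc
      have h1 := hval.2.2.2.1
      have h2 := hval.2.2.2.2.1
      simp only [igap, Finset.mem_Ioo] at hgi
      rw [Finset.mem_Icc] at hi
      omega
    rw [this]
    simp

lemma G_pool {n C : ℕ} {T : ℕ → Finset ℕ}
    (hout : ∀ i, i ∉ Finset.Icc 1 n → T i = ∅)
    (hTc : ∀ i ∈ Finset.Icc 1 n, (T i).card ≤ C) :
    ∀ i, GPCA C n T i ⊆ (Finset.Icc 1 n).biUnion T := by
  intro i
  have hinv := gpca_char n C T hout hTc
  rw [hinv.1 i]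
  apply Finset.union_subset
  · by_cases hi : i ∈ Finset.Icc 1 n
    · exact Finset.subset_biUnion_of_mem T hi
    · rw [hout i hi]; exact Finset.empty_subset _
  · intro t ht
    obtain ⟨g, hgAcc, rfl, _⟩ := mem_toolsAt.1 ht
    have hval := hinv.2 g hgAcc
    refine Finset.mem_biUnion.2 ⟨g.2.2, Finset.mem_Icc.2 ⟨?_, hval.2.2.2.2.1⟩, hval.2.1⟩
    have h1 := hval.2.2.1
    have h2 := hval.2.2.2.1
    omega

lemma G_supT {n C : ℕ} {T : ℕ → Finset ℕ}
    (hout : ∀ i, i ∉ Finset.Icc 1 n → T i = ∅)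
    (hTc : ∀ i ∈ Finset.Icc 1 n, (T i).card ≤ C) :
    ∀ i, T i ⊆ GPCA C n T i := by
  intro i
  rw [(gpca_char n C T hout hTc).1 i]
  exact Finset.subset_union_left

lemma fwd_invariant {C : ℕ} (G : ℕ → Finset ℕ) (hGc : ∀ i, (G i).card ≤ C) :
    ∀ m : ℕ,
      (∀ i, i ∉ Finset.Icc 2 (m+1) →
        passPairs C ((List.range m).map (fun i => (i+1, i+2))) G i = G i) ∧
      (C ≤ (passPairs C ((List.range m).map (fun i => (i+1, i+2))) G (m+1)).card ∨
        ∀ x i, 1 ≤ i → i ≤ m+1 → x ∈ G i →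
          x ∈ passPairs C ((List.range m).map (fun i => (i+1, i+2))) G (m+1)) := by
  intro m
  induction m with
  | zero =>
    constructor
    · intro i _; rfl
    · right
      intro x i h1 h2 hx
      have : i = 1 := by omega
      rwa [this] at hx
  | succ m ih =>
    obtain ⟨ihu, ihm⟩ := ih
    have hsplit : passPairs C ((List.range (m+1)).map (fun i => (i+1, i+2))) G
        = Function.update (passPairs C ((List.range m).map (fun i => (i+1, i+2))) G) (m+2)
          (fillFrom C (passPairs C ((List.range m).map (fun i => (i+1, i+2))) G (m+1))
            (passPairs C ((List.range m).map (fun i => (i+1, i+2))) G (m+2))) := by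
      rw [List.range_succ, List.map_append, passPairs_append]
      rfl
    set Pm := passPairs C ((List.range m).map (fun i => (i+1, i+2))) G with hPm
    have hdst : Pm (m+2) = G (m+2) := ihu (m+2) (by rw [Finset.mem_Icc]; omega)
    have hdstc : (Pm (m+2)).card ≤ C := by rw [hdst]; exact hGc _
    constructor
    · intro i hi
      rw [hsplit, Function.update_of_ne (by rw [Finset.mem_Icc] at hi; omega)]
      exact ihu i (by rw [Finset.mem_Icc] at hi ⊢; omega)
    · rw [hsplit]
      have hupd : Function.update Pm (m+2) (fillFrom C (Pm (m+1)) (Pm (m+2))) (m+1+1)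
          = fillFrom C (Pm (m+1)) (Pm (m+2)) := Function.update_self _ _ _
      rw [hupd]
      rcases ihm with hcard | hcov
      · left
        apply fill_reaches hdstc
        calc C ≤ (Pm (m+1)).card := hcard
          _ ≤ ((Pm (m+1)) ∪ (Pm (m+2))).card := Finset.card_le_card Finset.subset_union_left
      · rcases fill_invariant (src := Pm (m+1)) hdstc with h | h
        · left; exact h
        · right
          intro x i h1 h2 hx
          rcases Nat.lt_or_ge i (m+2) with hlt | hge
          · exact h (Finset.mem_union_left _ (hcov x i h1 (by omega) hx))
          · have : i = m + 2 := by omega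
            subst this
            exact h (Finset.mem_union_right _ (hdst ▸ hx))

lemma bwd_invariant {n C : ℕ} (F : ℕ → Finset ℕ) (hFc : ∀ i, (F i).card ≤ C)
    (hFn : C ≤ (F n).card) :
    ∀ m : ℕ, ∀ i, n - m ≤ i → i ≤ n →
      C ≤ (passPairs C ((List.range m).map (fun i => (n-i, n-i-1))) F i).card := by
  intro m
  induction m with
  | zero =>
    intro i h1 h2
    have : i = n := by omega
    subst this
    exact hFn
  | succ m ih =>
    intro i h1 h2
    have hsplit : passPairs C ((List.range (m+1)).map (fun i => (n-i, n-i-1))) F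
        = Function.update (passPairs C ((List.range m).map (fun i => (n-i, n-i-1))) F) (n-m-1)
          (fillFrom C (passPairs C ((List.range m).map (fun i => (n-i, n-i-1))) F (n-m))
            (passPairs C ((List.range m).map (fun i => (n-i, n-i-1))) F (n-m-1))) := by
      rw [List.range_succ, List.map_append, passPairs_append]
      rfl
    set Bm := passPairs C ((List.range m).map (fun i => (n-i, n-i-1))) F with hBm
    rw [hsplit]
    rcases eq_or_ne i (n-m-1) with rfl | hne
    · rw [Function.update_self]
      apply fill_reaches (passPairs_card_le C _ F hFc _)
      calc C ≤ (Bm (n-m)).card := ih (n-m) (le_refl _) (by omega)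
        _ ≤ _ := Finset.card_le_card Finset.subset_union_left
    · rw [Function.update_of_ne hne]
      exact ih i (by omega) h2

end TLPAux

open TLPAux in
/-- Theorem 2, statement 2 (optimal solution of the Tool Loading Problem):
`ToFullMag(GPCA(T₁,…,Tₙ;C))` is a feasible full-magazine sequence attaining the minimum
number of tool switches. -/
theorem toFullMag_gpca_optimal (n C : ℕ) (T : ℕ → Finset ℕ) (hn : 1 ≤ n)
    (hout : ∀ i, i ∉ Finset.Icc 1 n → T i = ∅)
    (hTc : ∀ i ∈ Finset.Icc 1 n, (T i).card ≤ C)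
    (hm : C < ((Finset.Icc 1 n).biUnion T).card) :
    Feasible C n T (toFullMag C n (GPCA C n T)) ∧
    ∀ M, Feasible C n T M →
      switches n (toFullMag C n (GPCA C n T)) ≤ switches n M := by
  classical
  have hGc : ∀ i, (GPCA C n T i).card ≤ C := G_card_le hout hTc
  have hGp : ∀ i, GPCA C n T i ⊆ (Finset.Icc 1 n).biUnion T := G_pool hout hTc
  have hGT : ∀ i, T i ⊆ GPCA C n T i := G_supT hout hTc
  have hAexp : toFullMag C n (GPCA C n T)
      = passPairs C (bwdPairs n) (passPairs C (fwdPairs n) (GPCA C n T)) := rfl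
  have hfwd_eq : fwdPairs n = (List.range (n-1)).map (fun i => (i+1, i+2)) := rfl
  have hbwd_eq : bwdPairs n = (List.range (n-1)).map (fun i => (n-i, n-i-1)) := rfl
  have hFc : ∀ i, (passPairs C (fwdPairs n) (GPCA C n T) i).card ≤ C :=
    passPairs_card_le C _ _ hGc
  have hmeq : n - 1 + 1 = n := by omega
  have hFn : C ≤ (passPairs C (fwdPairs n) (GPCA C n T) n).card := by
    obtain ⟨hu, hmain⟩ := fwd_invariant (GPCA C n T) hGc (n-1)
    rw [hfwd_eq]
    rcases hmain with h | h
    · rwa [hmeq] at h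
    · have hsub : (Finset.Icc 1 n).biUnion T ⊆
          passPairs C ((List.range (n-1)).map fun i => (i+1, i+2)) (GPCA C n T) n := by
        intro x hx
        obtain ⟨i, hi, hxi⟩ := Finset.mem_biUnion.1 hx
        rw [Finset.mem_Icc] at hi
        have := h x i hi.1 (by omega) (hGT i hxi)
        rwa [hmeq] at this
      have := Finset.card_le_card hsub
      omega
  have hAc : ∀ i, (toFullMag C n (GPCA C n T) i).card ≤ C := by
    rw [hAexp]; exact passPairs_card_le C _ _ hFc
  have hAbig : ∀ i ∈ Finset.Icc 1 n, C ≤ (toFullMag C n (GPCA C n T) i).card := by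
    intro i hi
    rw [Finset.mem_Icc] at hi
    rw [hAexp, hbwd_eq]
    exact bwd_invariant _ hFc hFn (n-1) i (by omega) hi.2
  have hAcard : ∀ i ∈ Finset.Icc 1 n, (toFullMag C n (GPCA C n T) i).card = C :=
    fun i hi => le_antisymm (hAc i) (hAbig i hi)
  have hAT : ∀ i, T i ⊆ toFullMag C n (GPCA C n T) i := by
    intro i
    refine (hGT i).trans ((passPairs_mono C (fwdPairs n) _ i).trans ?_)
    rw [hAexp]
    exact passPairs_mono C (bwdPairs n) _ i
  have hAp : ∀ i, toFullMag C n (GPCA C n T) i ⊆ (Finset.Icc 1 n).biUnion T := by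
    rw [hAexp]
    exact passPairs_pool C _ _ (passPairs_pool C _ _ hGp)
  have hfeas : Feasible C n T (toFullMag C n (GPCA C n T)) :=
    fun i hi => ⟨hAT i, hAcard i hi, hAp i⟩
  refine ⟨hfeas, ?_⟩
  intro M hM
  have hMT : ∀ i ∈ Finset.Icc 1 n, T i ⊆ M i := fun i hi => (hM i hi).1
  have hMcard : ∀ i ∈ Finset.Icc 1 n, (M i).card = C := fun i hi => (hM i hi).2.1
  have hMp : ∀ i ∈ Finset.Icc 1 n, M i ⊆ (Finset.Icc 1 n).biUnion T := fun i hi => (hM i hi).2.2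
  have hn1 : (1:ℕ) ∈ Finset.Icc 1 n := Finset.mem_Icc.2 ⟨le_refl 1, hn⟩
  have hswA : switches n (toFullMag C n (GPCA C n T))
      = ∑ t ∈ (Finset.Icc 1 n).biUnion T, (startsF n t (toFullMag C n (GPCA C n T))).card :=
    switches_eq_sum (fun i _ => hAp i)
  have hswM : switches n M = ∑ t ∈ (Finset.Icc 1 n).biUnion T, (startsF n t M).card :=
    switches_eq_sum hMp
  -- per-tool upper bound for the algorithm output
  have hper : ∀ t ∈ (Finset.Icc 1 n).biUnion T,
      (startsF n t (toFullMag C n (GPCA C n T))).card +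
        (if t ∈ toFullMag C n (GPCA C n T) 1 then 1 else 0)
      ≤ (unclT n T t (GPCA C n T)).card + 1 := by
    intro t ht
    have h3 : psiF n t (toFullMag C n (GPCA C n T)) ≤ psiF n t (GPCA C n T) :=
      psi_toFullMag (GPCA C n T)
    have h2 := L2 (C := C) hout hTc ht
    have hpsiA : psiF n t (toFullMag C n (GPCA C n T))
        = (startsF n t (toFullMag C n (GPCA C n T))).card +
          (if t ∈ toFullMag C n (GPCA C n T) 1 then 1 else 0) := rfl
    have hpsiG : psiF n t (GPCA C n T)
        = (startsF n t (GPCA C n T)).card + (if t ∈ GPCA C n T 1 then 1 else 0) := rfl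
    rw [G_one hout hTc] at hpsiG
    omega
  have hA1 : (toFullMag C n (GPCA C n T) 1).card = C := hAcard 1 hn1
  have e1 : ∑ t ∈ (Finset.Icc 1 n).biUnion T,
      ((startsF n t (toFullMag C n (GPCA C n T))).card +
        (if t ∈ toFullMag C n (GPCA C n T) 1 then 1 else 0))
      = switches n (toFullMag C n (GPCA C n T)) + C := by
    rw [Finset.sum_add_distrib, ← hswA, sum_indicator_one (fun x hx => hAp 1 hx), hA1]
  have e2 : ∑ t ∈ (Finset.Icc 1 n).biUnion T, ((unclT n T t (GPCA C n T)).card + 1)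
      = (∑ t ∈ (Finset.Icc 1 n).biUnion T, (unclT n T t (GPCA C n T)).card)
        + ((Finset.Icc 1 n).biUnion T).card := by
    rw [Finset.sum_add_distrib, Finset.sum_const, smul_eq_mul, mul_one]
  have hub : switches n (toFullMag C n (GPCA C n T)) + C
      ≤ (∑ t ∈ (Finset.Icc 1 n).biUnion T, (unclT n T t (GPCA C n T)).card)
        + ((Finset.Icc 1 n).biUnion T).card := by
    rw [← e1, ← e2]
    exact Finset.sum_le_sum hper
  -- per-tool lower bound for M
  have hperM : ∀ t ∈ (Finset.Icc 1 n).biUnion T,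
      (unclT n T t M).card + (if t ∈ M 1 then 0 else 1) ≤ (startsF n t M).card :=
    fun t ht => L1 hout hMT ht
  have hlb : (∑ t ∈ (Finset.Icc 1 n).biUnion T, (unclT n T t M).card)
      + (∑ t ∈ (Finset.Icc 1 n).biUnion T, (if t ∈ M 1 then 0 else 1)) ≤ switches n M := by
    rw [hswM, ← Finset.sum_add_distrib]
    exact Finset.sum_le_sum hperM
  have hindM : (∑ t ∈ (Finset.Icc 1 n).biUnion T, (if t ∈ M 1 then 0 else 1)) + C
      = ((Finset.Icc 1 n).biUnion T).card := by
    have h2 : (∑ t ∈ (Finset.Icc 1 n).biUnion T,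
        ((if t ∈ M 1 then 0 else 1) + (if t ∈ M 1 then 1 else 0)))
        = ((Finset.Icc 1 n).biUnion T).card := by
      have h1 : ∀ t : ℕ, ((if t ∈ M 1 then 0 else 1) + (if t ∈ M 1 then 1 else 0)) = 1 := by
        intro t; split <;> rfl
      simp_rw [h1]
      rw [Finset.sum_const, smul_eq_mul, mul_one]
    have h3 := sum_indicator_one (hMp 1 hn1)
    rw [Finset.sum_add_distrib, h3, hMcard 1 hn1] at h2
    exact h2
  have hcnt1 : (∑ t ∈ (Finset.Icc 1 n).biUnion T, (unclT n T t (GPCA C n T)).card)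
      + (AccS n C T).card = (itemList n T).toFinset.card := by
    have h := sum_unclT hout (GPCA C n T)
    rwa [← acc_eq_closedF hout hTc] at h
  have hcnt2 := sum_unclT hout M
  have hccle := closed_card_le_acc hout (fun i hi => ⟨hMT i hi, hMcard i hi⟩)
  omega
end
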